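/- arXiv:2509.12902 — 7 statements merged into one kernel-verified Lean document; each statement's English description precedes it below -/
import Mathlib

section
/- Let γ = [[a,b],[c,d]] ∈ SL(2,ℝ) with abcd ≠ 0, and let h(x,y) = a²x/y + b²/(xy) + c²xy + d²y/x - 2 for x,y > 0. Then the infimum of h over x,y > 0 equals 2|ad| + 2|bc| - 2, attained at x² = |bd/(ac)|, y² = |ab/(cd)|. Consequently, if abcd > 0 the infimum equals 2|ad+bc| - 2, and if abcd < 0 the infimum equals 0. -/
open Real

theorem stmt1 (a b c d : ℝ) (hdet : a * d - b * c = 1) (h0 : a * b * c * d ≠ 0)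
    (h : ℝ → ℝ → ℝ)
    (hh : ∀ x y, h x y = a ^ 2 * x / y + b ^ 2 / (x * y) + c ^ 2 * x * y + d ^ 2 * y / x - 2) :
    IsLeast {z | ∃ x > (0 : ℝ), ∃ y > (0 : ℝ), h x y = z} (2 * |a * d| + 2 * |b * c| - 2) ∧
    h (Real.sqrt |b * d / (a * c)|) (Real.sqrt |a * b / (c * d)|)
      = 2 * |a * d| + 2 * |b * c| - 2 ∧
    (0 < a * b * c * d → 2 * |a * d| + 2 * |b * c| - 2 = 2 * |a * d + b * c| - 2) ∧
    (a * b * c * d < 0 → 2 * |a * d| + 2 * |b * c| - 2 = 0) := by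
  have ha : a ≠ 0 := by intro h'; apply h0; rw [h']; ring
  have hb : b ≠ 0 := by intro h'; apply h0; rw [h']; ring
  have hc : c ≠ 0 := by intro h'; apply h0; rw [h']; ring
  have hd : d ≠ 0 := by intro h'; apply h0; rw [h']; ring
  have hA : (0:ℝ) < |a| := abs_pos.mpr ha
  have hB : (0:ℝ) < |b| := abs_pos.mpr hb
  have hC : (0:ℝ) < |c| := abs_pos.mpr hc
  have hD : (0:ℝ) < |d| := abs_pos.mpr hd
  -- the special point
  set s := Real.sqrt |b * d / (a * c)| with hs_def
  set t := Real.sqrt |a * b / (c * d)| with ht_def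
  have hs : 0 < s := Real.sqrt_pos.mpr (abs_pos.mpr (by
    apply div_ne_zero (mul_ne_zero hb hd) (mul_ne_zero ha hc)))
  have ht : 0 < t := Real.sqrt_pos.mpr (abs_pos.mpr (by
    apply div_ne_zero (mul_ne_zero ha hb) (mul_ne_zero hc hd)))
  have hst : s * t = |b| / |c| := by
    rw [hs_def, ht_def, ← Real.sqrt_mul (abs_nonneg _)]
    have : |b * d / (a * c)| * |a * b / (c * d)| = (b / c) ^ 2 := by
      rw [← abs_mul, abs_eq (by positivity)]
      left; field_simp
    rw [this, Real.sqrt_sq_eq_abs, abs_div]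
  have hts : t / s = |a| / |d| := by
    rw [hs_def, ht_def, ← Real.sqrt_div (abs_nonneg _)]
    have : |a * b / (c * d)| / |b * d / (a * c)| = (a / d) ^ 2 := by
      rw [← abs_div, abs_eq (by positivity)]
      left; field_simp
    rw [this, Real.sqrt_sq_eq_abs, abs_div]
  have hst' : s / t = |d| / |a| := by
    rw [div_eq_div_iff hs.ne' hD.ne'] at hts
    rw [div_eq_div_iff ht.ne' hA.ne']
    linear_combination -hts
  have hval : h s t = 2 * |a * d| + 2 * |b * c| - 2 := by
    rw [hh]
    have e1 : a ^ 2 * s / t = |a| * |d| := by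
      rw [mul_div_assoc, hst']
      field_simp; rw [← sq_abs a]
    have e2 : b ^ 2 / (s * t) = |b| * |c| := by
      rw [hst]; field_simp; rw [← sq_abs b]
    have e3 : c ^ 2 * s * t = |b| * |c| := by
      rw [mul_assoc, hst]; field_simp; rw [← sq_abs c]
    have e4 : d ^ 2 * t / s = |a| * |d| := by
      rw [mul_div_assoc, hts]; field_simp; rw [← sq_abs d]
    rw [e1, e2, e3, e4, abs_mul, abs_mul]; ring
  have hlb : ∀ x : ℝ, 0 < x → ∀ y : ℝ, 0 < y →
      2 * |a * d| + 2 * |b * c| - 2 ≤ h x y := by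
    intro x hx y hy
    rw [hh, sub_le_sub_iff_right]
    have hxy : (0:ℝ) < x * y := mul_pos hx hy
    have key : (2 * (|a| * |d|) + 2 * (|b| * |c|)) * (x * y)
        ≤ a ^ 2 * x ^ 2 + b ^ 2 + c ^ 2 * (x * y) ^ 2 + d ^ 2 * y ^ 2 := by
      nlinarith [sq_nonneg (|a| * x - |d| * y), sq_nonneg (|b| - |c| * (x * y)),
        sq_abs a, sq_abs b, sq_abs c, sq_abs d]
    calc 2 * |a * d| + 2 * |b * c|
        = (2 * (|a| * |d|) + 2 * (|b| * |c|)) * (x * y) / (x * y) := by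
          rw [abs_mul, abs_mul]; field_simp
      _ ≤ (a ^ 2 * x ^ 2 + b ^ 2 + c ^ 2 * (x * y) ^ 2 + d ^ 2 * y ^ 2) / (x * y) := by
          gcongr
      _ = a ^ 2 * x / y + b ^ 2 / (x * y) + c ^ 2 * x * y + d ^ 2 * y / x := by
          field_simp
  refine ⟨⟨⟨s, hs, t, ht, hval⟩, ?_⟩, hval, ?_, ?_⟩
  · rintro z ⟨x, hx, y, hy, rfl⟩
    exact hlb x hx y hy
  · intro hpos
    have hprod : 0 < (a * d) * (b * c) := by nlinarith
    rcases mul_pos_iff.mp hprod with ⟨h1, h2⟩ | ⟨h1, h2⟩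
    · rw [abs_of_pos h1, abs_of_pos h2, abs_of_pos (by linarith)]; ring
    · rw [abs_of_neg h1, abs_of_neg h2, abs_of_neg (by linarith)]
      ring
  · intro hneg
    have hprod : (a * d) * (b * c) < 0 := by nlinarith
    rcases mul_neg_iff.mp hprod with ⟨h1, h2⟩ | ⟨h1, h2⟩
    · rw [abs_of_pos h1, abs_of_neg h2]; linarith
    · linarith
end

section
/- Let γ = [[a,b],[c,d]] ∈ SL(2,ℝ) with abcd > 0, so that setting B = |ad + bc| one has B > 1 and B² - 1 = 4abcd. Then for any continuous, rapidly decreasing f : [1,∞) → ℝ, the integral ∫₀^∞ f((a²y² + b²)(c²y² + d²)/y²) dy/y equals 2 ∫_{√(B²-1)}^∞ f(x²+1)/√(x² - (B²-1)) dx. -/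
open Real MeasureTheory
open Set

set_option maxHeartbeats 1000000

lemma aux_subst (p q : ℝ) (hp : 0 < p) (hq : 0 < q) (f : ℝ → ℝ)
    (hfc : ContinuousOn f (Set.Ici 1)) (C : ℝ) (hC : ∀ u ≥ (1:ℝ), |f u| ≤ C / u) :
    ∫ y in Set.Ioi (0:ℝ), f ((p*y + q/y)^2 + 1) / y =
      2 * ∫ x in Set.Ioi (2 * Real.sqrt (p*q)),
        f (x^2+1) / Real.sqrt (x^2 - 4*(p*q)) := by
  have hqp : 0 < q/p := div_pos hq hp
  set t := Real.sqrt (q/p) with htdef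
  set m := 2 * Real.sqrt (p*q) with hmdef
  have ht : 0 < t := Real.sqrt_pos.mpr hqp
  have ht2 : p * t^2 = q := by
    rw [htdef, Real.sq_sqrt hqp.le]; field_simp
  have hm0 : 0 < m := by positivity
  have hm2 : m^2 = 4*(p*q) := by
    rw [hmdef, mul_pow, Real.sq_sqrt (by positivity : (0:ℝ) ≤ p*q)]; ring
  -- images
  have himg1 : (fun y => p*y + q/y) '' Ioi t = Ioi m := by
    ext x
    simp only [mem_image, mem_Ioi]
    constructor
    · rintro ⟨y, hy, rfl⟩
      have hy0 : 0 < y := ht.trans hy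
      have hd : q/y < p*y := by rw [div_lt_iff₀ hy0]; nlinarith [mul_lt_mul'' hy hy ht.le ht.le]
      have hpos : 0 < p*y + q/y := by positivity
      have hsq : m^2 < (p*y + q/y)^2 := by
        have : (p*y + q/y)^2 - m^2 = (p*y - q/y)^2 := by rw [hm2]; field_simp; ring
        nlinarith [sq_nonneg (p*y - q/y)]
      exact lt_of_pow_lt_pow_left₀ 2 hpos.le hsq
    · intro hx
      have hx0 : 0 < x := hm0.trans hx
      have hx2 : m^2 < x^2 := by nlinarith
      have h4 : 0 < x^2 - 4*(p*q) := by nlinarith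
      set s := Real.sqrt (x^2 - 4*(p*q)) with hsdef
      have hs0 : 0 < s := Real.sqrt_pos.mpr h4
      have hs2 : s^2 = x^2 - 4*(p*q) := Real.sq_sqrt h4.le
      have hsx : s < x := by
        refine lt_of_pow_lt_pow_left₀ 2 hx0.le ?_
        nlinarith
      refine ⟨(x+s)/(2*p), ?_, ?_⟩
      · have hY : 0 < (x+s)/(2*p) := by positivity
        rw [htdef, Real.sqrt_lt' hY, div_pow, lt_div_iff₀ (by positivity), div_mul_eq_mul_div,
          div_lt_iff₀ hp]
        nlinarith [mul_pos (show (0:ℝ) < x+s-m by linarith) (show (0:ℝ) < x+s+m by linarith)]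
      · have hne : x + s ≠ 0 := by positivity
        field_simp
        nlinarith [hs2]
  have himg2 : (fun y => p*y + q/y) '' Ioo 0 t = Ioi m := by
    ext x
    simp only [mem_image, mem_Ioo, mem_Ioi]
    constructor
    · rintro ⟨y, ⟨hy0, hy⟩, rfl⟩
      have hd : p*y < q/y := by rw [lt_div_iff₀ hy0]; nlinarith [mul_lt_mul'' hy hy hy0.le hy0.le]
      have hpos : 0 < p*y + q/y := by positivity
      have hsq : m^2 < (p*y + q/y)^2 := by
        have : (p*y + q/y)^2 - m^2 = (p*y - q/y)^2 := by rw [hm2]; field_simp; ring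
        nlinarith [sq_nonneg (p*y - q/y)]
      exact lt_of_pow_lt_pow_left₀ 2 hpos.le hsq
    · intro hx
      have hx0 : 0 < x := hm0.trans hx
      have hx2 : m^2 < x^2 := by nlinarith
      have h4 : 0 < x^2 - 4*(p*q) := by nlinarith
      set s := Real.sqrt (x^2 - 4*(p*q)) with hsdef
      have hs0 : 0 < s := Real.sqrt_pos.mpr h4
      have hs2 : s^2 = x^2 - 4*(p*q) := Real.sq_sqrt h4.le
      have hsx : s < x := by
        refine lt_of_pow_lt_pow_left₀ 2 hx0.le ?_
        nlinarith
      have hxs : 0 < x - s := sub_pos.mpr hsx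
      refine ⟨(x-s)/(2*p), ⟨by positivity, ?_⟩, ?_⟩
      · rw [htdef, Real.lt_sqrt (by positivity), div_pow, div_lt_div_iff₀ (by positivity) hp]
        nlinarith [mul_pos hs0 hxs]
      · have hne : x - s ≠ 0 := ne_of_gt hxs
        field_simp
        nlinarith [hs2]
  -- injectivity
  have hinj1 : InjOn (fun y => p*y + q/y) (Ioi t) := by
    intro y hy z hz h
    simp only [mem_Ioi] at hy hz
    have hy0 : 0 < y := ht.trans hy
    have hz0 : 0 < z := ht.trans hz
    simp only at h
    have h' : (y - z) * (p*(y*z) - q) = 0 := by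
      field_simp at h
      nlinarith [h]
    have hgt : 0 < p*(y*z) - q := by nlinarith [mul_lt_mul'' hy hz ht.le ht.le]
    rcases mul_eq_zero.mp h' with h1 | h2
    · linarith
    · linarith
  have hinj2 : InjOn (fun y => p*y + q/y) (Ioo 0 t) := by
    intro y hy z hz h
    simp only [mem_Ioo] at hy hz
    obtain ⟨hy0, hy'⟩ := hy
    obtain ⟨hz0, hz'⟩ := hz
    simp only at h
    have h' : (y - z) * (p*(y*z) - q) = 0 := by
      field_simp at h
      nlinarith [h]
    have hgt : p*(y*z) - q < 0 := by nlinarith [mul_lt_mul'' hy' hz' hy0.le hz0.le]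
    rcases mul_eq_zero.mp h' with h1 | h2
    · linarith
    · linarith
  -- derivative
  have hderiv : ∀ y : ℝ, y ≠ 0 → HasDerivAt (fun y => p*y + q/y) (p - q/y^2) y := by
    intro y hy
    have h1 : HasDerivAt (fun x : ℝ => p * x + q * x⁻¹) (p * 1 + q * (-(y^2)⁻¹)) y :=
      ((hasDerivAt_id y).const_mul p).add ((hasDerivAt_inv hy).const_mul q)
    have h2 : p * 1 + q * (-(y^2)⁻¹) = p - q/y^2 := by field_simp; ring
    simpa [div_eq_mul_inv, h2, sub_eq_add_neg] using h1
    -- change of variables, branch 1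
  have hE1 : (∫ x in Ioi m, f (x^2+1) / Real.sqrt (x^2 - 4*(p*q)))
      = ∫ y in Ioi t, f ((p*y + q/y)^2 + 1) / y := by
    rw [← himg1, integral_image_eq_integral_abs_deriv_smul measurableSet_Ioi
      (fun y hy => ((hderiv y (ne_of_gt (ht.trans hy))).hasDerivWithinAt)) hinj1]
    refine setIntegral_congr_fun measurableSet_Ioi (fun y hy => ?_)
    simp only [mem_Ioi] at hy
    have hy0 : 0 < y := ht.trans hy
    have hd : 0 < p - q/y^2 := by
      rw [sub_pos, div_lt_iff₀ (by positivity)]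
      nlinarith [mul_lt_mul'' hy hy ht.le ht.le]
    have h1 : (p*y + q/y)^2 - 4*(p*q) = (p*y - q/y)^2 := by field_simp; ring
    have h3 : p*y - q/y = y * (p - q/y^2) := by field_simp
    simp only [smul_eq_mul]
    rw [h1, Real.sqrt_sq_eq_abs, h3, abs_mul, abs_of_pos hy0, abs_of_pos hd,
      ← mul_div_assoc, mul_comm y (p - q/y^2)]
    exact mul_div_mul_left _ y (ne_of_gt hd)
  -- change of variables, branch 2
  have hE2 : (∫ x in Ioi m, f (x^2+1) / Real.sqrt (x^2 - 4*(p*q)))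
      = ∫ y in Ioo 0 t, f ((p*y + q/y)^2 + 1) / y := by
    rw [← himg2, integral_image_eq_integral_abs_deriv_smul measurableSet_Ioo
      (fun y hy => ((hderiv y (ne_of_gt hy.1)).hasDerivWithinAt)) hinj2]
    refine setIntegral_congr_fun measurableSet_Ioo (fun y hy => ?_)
    obtain ⟨hy0, hyt⟩ := hy
    have hd : p - q/y^2 < 0 := by
      rw [sub_neg, lt_div_iff₀ (by positivity)]
      nlinarith [mul_lt_mul'' hyt hyt hy0.le hy0.le]
    have h1 : (p*y + q/y)^2 - 4*(p*q) = (p*y - q/y)^2 := by field_simp; ring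
    have h3 : p*y - q/y = y * (p - q/y^2) := by field_simp
    simp only [smul_eq_mul]
    rw [h1, Real.sqrt_sq_eq_abs, h3, abs_mul, abs_of_pos hy0, abs_of_neg hd,
      ← mul_div_assoc, mul_comm y (-(p - q/y^2))]
    exact mul_div_mul_left _ y (ne_of_gt (neg_pos.mpr hd))
  -- integrability
  have hC' : ∀ u ≥ (1:ℝ), |f u| ≤ (max C 0) / u := by
    intro u hu
    have hu0 : (0:ℝ) < u := by linarith
    exact (hC u hu).trans ((div_le_div_iff_of_pos_right hu0).mpr (le_max_left C 0))
  set C' := max C 0 with hC'def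
  have hC'0 : 0 ≤ C' := le_max_right C 0
  -- continuity of the integrand
  have hcont : ContinuousOn (fun y => f ((p*y + q/y)^2 + 1) / y) (Ioi 0) := by
    have hinner : ContinuousOn (fun y : ℝ => (p*y + q/y)^2 + 1) (Ioi 0) := by
      apply ContinuousOn.add _ continuousOn_const
      exact ((continuousOn_const.mul continuousOn_id).add
        (continuousOn_const.div continuousOn_id (fun y hy => ne_of_gt hy))).pow 2
    have hmem : ∀ y ∈ Ioi (0:ℝ), (p*y + q/y)^2 + 1 ∈ Ici (1:ℝ) := fun y hy => by
      simp only [mem_Ici]; nlinarith [sq_nonneg (p*y + q/y)]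
    exact (hfc.comp hinner hmem).div continuousOn_id (fun y hy => ne_of_gt hy)
  have hval : ∀ y : ℝ, 0 < y → (1:ℝ) ≤ (p*y + q/y)^2 + 1 := fun y hy => by
    nlinarith [sq_nonneg (p*y + q/y)]
  -- integrability on (0,1]
  have hIoc : IntegrableOn (fun y => f ((p*y + q/y)^2 + 1) / y) (Ioc 0 1) := by
    refine Integrable.mono' (g := fun _ => C' / q^2)
      (integrableOn_const measure_Ioc_lt_top.ne)
      ((hcont.mono Ioc_subset_Ioi_self).aestronglyMeasurable measurableSet_Ioc) ?_
    rw [ae_restrict_iff' measurableSet_Ioc]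
    refine ae_of_all _ (fun y hy => ?_)
    obtain ⟨hy0, hy1⟩ := hy
    have hu1 : (1:ℝ) ≤ (p*y + q/y)^2 + 1 := hval y hy0
    have hu0 : (0:ℝ) < (p*y + q/y)^2 + 1 := by linarith
    have hfu : |f ((p*y + q/y)^2 + 1)| * ((p*y + q/y)^2 + 1) ≤ C' := by
      have := hC' _ hu1
      rw [le_div_iff₀ hu0] at this
      exact this
    have h6 : q^2 ≤ ((p*y + q/y)^2 + 1) * y^2 := by
      have e : ((p*y + q/y)^2 + 1) * y^2 = p^2*y^4 + 2*(p*q)*y^2 + q^2 + y^2 := by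
        field_simp; ring
      nlinarith [e, sq_nonneg (p*y^2), mul_pos (mul_pos hp hq) (pow_pos hy0 2), sq_nonneg y]
    rw [Real.norm_eq_abs, abs_div, abs_of_pos hy0, div_le_div_iff₀ hy0 (by positivity)]
    nlinarith [mul_le_mul_of_nonneg_left h6 (abs_nonneg (f ((p*y + q/y)^2 + 1))),
      mul_le_mul_of_nonneg_right hfu (sq_nonneg y), abs_nonneg (f ((p*y + q/y)^2 + 1)),
      mul_nonneg hC'0 (show (0:ℝ) ≤ y - y^2 by nlinarith)]
  -- integrability on (1,∞)
  have hIoi1 : IntegrableOn (fun y => f ((p*y + q/y)^2 + 1) / y) (Ioi 1) := by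
    refine Integrable.mono' (g := fun y => C'/p^2 * (y^3)⁻¹) ?_
      ((hcont.mono (Ioi_subset_Ioi zero_le_one)).aestronglyMeasurable measurableSet_Ioi) ?_
    · have h := (integrableOn_Ioi_rpow_of_lt (show (-3:ℝ) < -1 by norm_num) one_pos).const_mul
        (C'/p^2)
      refine MeasureTheory.IntegrableOn.congr_fun h (fun y hy => ?_) measurableSet_Ioi
      simp only [mem_Ioi] at hy
      rw [show (-3:ℝ) = -((3:ℕ):ℝ) by norm_num, Real.rpow_neg (by linarith), Real.rpow_natCast]
    · rw [ae_restrict_iff' measurableSet_Ioi]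
      refine ae_of_all _ (fun y hy => ?_)
      simp only [mem_Ioi] at hy
      have hy0 : (0:ℝ) < y := lt_trans one_pos hy
      have hu1 : (1:ℝ) ≤ (p*y + q/y)^2 + 1 := hval y hy0
      have hu0 : (0:ℝ) < (p*y + q/y)^2 + 1 := by linarith
      have hfu : |f ((p*y + q/y)^2 + 1)| * ((p*y + q/y)^2 + 1) ≤ C' := by
        have := hC' _ hu1
        rw [le_div_iff₀ hu0] at this
        exact this
      have h6 : p^2*y^2 ≤ (p*y + q/y)^2 + 1 := by
        nlinarith [mul_pos (mul_pos hp hy0) (div_pos hq hy0), sq_nonneg (q/y)]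
      have heq : (fun y : ℝ => C'/p^2 * (y^3)⁻¹) y = C'/(p^2*y^3) := by
        simp only []; ring
      rw [Real.norm_eq_abs, abs_div, abs_of_pos hy0, (show C'/p^2 * (y^3)⁻¹ = C'/(p^2*y^3) from heq),
        div_le_div_iff₀ hy0 (by positivity)]
      nlinarith [mul_le_mul_of_nonneg_right
          (mul_le_mul_of_nonneg_left h6 (abs_nonneg (f ((p*y + q/y)^2 + 1)))) hy0.le,
        mul_le_mul_of_nonneg_right hfu hy0.le,
        abs_nonneg (f ((p*y + q/y)^2 + 1))]
  have hInt : IntegrableOn (fun y => f ((p*y + q/y)^2 + 1) / y) (Ioi 0) := by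
    have h := hIoc.union hIoi1
    rwa [Ioc_union_Ioi_eq_Ioi zero_le_one] at h
  have hsplit : (∫ y in Ioi (0:ℝ), f ((p*y + q/y)^2 + 1) / y)
      = (∫ y in Ioo 0 t, f ((p*y + q/y)^2 + 1) / y)
        + ∫ y in Ioi t, f ((p*y + q/y)^2 + 1) / y := by
    rw [← Ioc_union_Ioi_eq_Ioi ht.le,
      setIntegral_union (Ioc_disjoint_Ioi le_rfl) measurableSet_Ioi
        (hInt.mono_set (by rw [← Ioc_union_Ioi_eq_Ioi ht.le]; exact subset_union_left))
        (hInt.mono_set (Ioi_subset_Ioi ht.le)),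
      integral_Ioc_eq_integral_Ioo]
  rw [hsplit, ← hE1, ← hE2]
  ring

theorem stmt2 (a b c d : ℝ) (hdet : a * d - b * c = 1) (habcd : 0 < a * b * c * d)
    (B : ℝ) (hB : B = |a * d + b * c|) (f : ℝ → ℝ)
    (hf : ContinuousOn f (Set.Ici 1))
    (hdecay : ∀ n : ℕ, ∃ C : ℝ, ∀ u ≥ (1 : ℝ), |f u| ≤ C / u ^ n) :
    1 < B ∧ B ^ 2 - 1 = 4 * (a * b * c * d) ∧
    ∫ y in Set.Ioi (0 : ℝ), f ((a ^ 2 * y ^ 2 + b ^ 2) * (c ^ 2 * y ^ 2 + d ^ 2) / y ^ 2) / y =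
      2 * ∫ x in Set.Ioi (Real.sqrt (B ^ 2 - 1)),
        f (x ^ 2 + 1) / Real.sqrt (x ^ 2 - (B ^ 2 - 1)) := by
  have hBsq : B ^ 2 - 1 = 4 * (a * b * c * d) := by
    rw [hB, sq_abs]
    linear_combination (a*d - b*c + 1) * hdet
  have hB0 : 0 ≤ B := hB ▸ abs_nonneg _
  have hB1 : 1 < B := by nlinarith
  refine ⟨hB1, hBsq, ?_⟩
  obtain ⟨C, hC⟩ := hdecay 1
  simp only [pow_one] at hC
  have hac : a * c ≠ 0 := by
    intro h
    have : a * b * c * d = (a*c) * (b*d) := by ring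
    rw [h, zero_mul] at this
    exact absurd this (ne_of_gt habcd)
  have hbd : b * d ≠ 0 := by
    intro h
    have : a * b * c * d = (a*c) * (b*d) := by ring
    rw [h, mul_zero] at this
    exact absurd this (ne_of_gt habcd)
  set p := |a*c| with hpdef
  set q := |b*d| with hqdef
  have hp : 0 < p := abs_pos.mpr hac
  have hq : 0 < q := abs_pos.mpr hbd
  have hpq : p * q = a * b * c * d := by
    rw [hpdef, hqdef, ← abs_mul, show a*c*(b*d) = a*b*c*d from by ring, abs_of_pos habcd]
  have hp2 : p^2 = (a*c)^2 := sq_abs _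
  have hq2 : q^2 = (b*d)^2 := sq_abs _
  have hB4 : B ^ 2 - 1 = 4 * (p * q) := by rw [hpq]; exact hBsq
  have hsqrt : Real.sqrt (B ^ 2 - 1) = 2 * Real.sqrt (p * q) := by
    rw [hB4, show (4:ℝ) * (p*q) = 2^2 * (p*q) by norm_num,
      Real.sqrt_mul (by positivity) (p*q), Real.sqrt_sq (by norm_num : (0:ℝ) ≤ 2)]
  have hLHS : (∫ y in Set.Ioi (0:ℝ),
        f ((a ^ 2 * y ^ 2 + b ^ 2) * (c ^ 2 * y ^ 2 + d ^ 2) / y ^ 2) / y)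
      = ∫ y in Set.Ioi (0:ℝ), f ((p*y + q/y)^2 + 1) / y := by
    refine setIntegral_congr_fun measurableSet_Ioi (fun y hy => ?_)
    simp only [Set.mem_Ioi] at hy
    have harg : (a ^ 2 * y ^ 2 + b ^ 2) * (c ^ 2 * y ^ 2 + d ^ 2) / y ^ 2
        = (p*y + q/y)^2 + 1 := by
      rw [div_eq_iff (by positivity : (y:ℝ)^2 ≠ 0)]
      have e : ((p*y + q/y)^2 + 1) * y^2 = p^2*y^4 + 2*(p*q)*y^2 + q^2 + y^2 := by
        field_simp; ring
      rw [e, hp2, hq2, hpq]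
      linear_combination y^2 * (a*d - b*c + 1) * hdet
    rw [harg]
  rw [hLHS, hsqrt, hB4]
  exact aux_subst p q hp hq f hf C hC
end

section
/- Let γ = [[a,b],[c,d]] ∈ SL(2,ℝ) with abcd < 0 and B = |ad + bc| < 1. Then for any continuous, rapidly decreasing f : [1,∞) → ℝ, ∫₀^∞ f((a²y² + b²)(c²y² + d²)/y²) dy/y = 2 ∫₀^∞ f(x²+1)/√(x² + 1 - B²) dx. -/
open Real MeasureTheory

theorem stmt3 (a b c d : ℝ) (hdet : a * d - b * c = 1) (habcd : a * b * c * d < 0)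
    (B : ℝ) (hB : B = |a * d + b * c|) (hB1 : B < 1) (f : ℝ → ℝ)
    (hf : ContinuousOn f (Set.Ici 1))
    (hdecay : ∀ n : ℕ, ∃ C : ℝ, ∀ u ≥ (1 : ℝ), |f u| ≤ C / u ^ n) :
    ∫ y in Set.Ioi (0 : ℝ), f ((a ^ 2 * y ^ 2 + b ^ 2) * (c ^ 2 * y ^ 2 + d ^ 2) / y ^ 2) / y =
      2 * ∫ x in Set.Ioi (0 : ℝ), f (x ^ 2 + 1) / Real.sqrt (x ^ 2 + 1 - B ^ 2) := by
  set p := a * c with hp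
  set q := b * d with hq
  have hpq : p * q < 0 := by rw [hp, hq]; nlinarith
  have hB2 : B ^ 2 = 1 + 4 * (p * q) := by
    rw [hB, sq_abs, hp, hq]; nlinarith
  set φ : ℝ → ℝ := fun y => p * y + q * y⁻¹ with hφ
  set h : ℝ → ℝ := fun u => f (u ^ 2 + 1) / Real.sqrt (u ^ 2 + 1 - B ^ 2) with hh
  -- key algebraic facts
  have key1 : ∀ y : ℝ, y ≠ 0 → (p * y - q * y⁻¹) ^ 2 = φ y ^ 2 + 1 - B ^ 2 := by
    intro y hy
    have hyy : y * y⁻¹ = 1 := mul_inv_cancel₀ hy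
    simp only [hφ]
    linear_combination hB2 - 4 * p * q * hyy
  have key2 : ∀ y : ℝ, 0 < y →
      (a ^ 2 * y ^ 2 + b ^ 2) * (c ^ 2 * y ^ 2 + d ^ 2) / y ^ 2 = φ y ^ 2 + 1 := by
    intro y hy
    have hy0 : y ≠ 0 := ne_of_gt hy
    have hyy : y * y⁻¹ = 1 := mul_inv_cancel₀ hy0
    simp only [hφ, hp, hq]
    rw [div_eq_iff (pow_ne_zero 2 hy0)]
    linear_combination (a * d - b * c + 1) * y ^ 2 * hdet -
      (b * d) ^ 2 * (y * y⁻¹ + 1) * hyy - 2 * a * b * c * d * y ^ 2 * hyy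
  -- derivative
  have hderiv : ∀ y ∈ Set.Ioi (0 : ℝ), HasDerivWithinAt φ (p - q * (y ^ 2)⁻¹) (Set.Ioi 0) y := by
    intro y hy
    have hy0 : y ≠ 0 := ne_of_gt hy
    have h1 : HasDerivAt φ (p * 1 + q * (-(y ^ 2)⁻¹)) y := by
      exact ((hasDerivAt_id y).const_mul p).add ((hasDerivAt_inv hy0).const_mul q)
    rw [show p - q * (y ^ 2)⁻¹ = p * 1 + q * (-(y ^ 2)⁻¹) by ring]
    exact h1.hasDerivWithinAt
  -- injectivity
  have hinj : Set.InjOn φ (Set.Ioi 0) := by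
    intro y1 hy1 y2 hy2 heq
    simp only [Set.mem_Ioi] at hy1 hy2
    have h1 : (y1 - y2) * (p * y1 * y2 - q) = 0 := by
      have := heq
      simp only [hφ] at this
      field_simp at this
      nlinarith [this]
    have h2 : p * y1 * y2 - q ≠ 0 := by
      rcases lt_or_gt_of_ne (fun h : p = 0 => by simp [h] at hpq) with hp0 | hp0
      · have hq0 : 0 < q := by nlinarith
        nlinarith [mul_pos hy1 hy2]
      · have hq0 : q < 0 := by nlinarith
        nlinarith [mul_pos hy1 hy2]
    have := mul_eq_zero.mp h1
    rcases this with h | h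
    · linarith [sub_eq_zero.mp h]
    · exact absurd h h2
  -- surjectivity
  have hsurj : φ '' Set.Ioi 0 = Set.univ := by
    ext u
    simp only [Set.mem_image, Set.mem_univ, iff_true, Set.mem_Ioi]
    set s := Real.sqrt (u ^ 2 - 4 * (p * q)) with hs
    have hs2 : s ^ 2 = u ^ 2 - 4 * (p * q) := Real.sq_sqrt (by nlinarith)
    have hsu : |u| < s := by
      nlinarith [Real.sqrt_nonneg (u ^ 2 - 4 * (p * q)), sq_abs u]
    obtain ⟨hsu1, hsu2⟩ := abs_lt.mp hsu
    have hkey : (u - s) * (u + s) = 4 * (p * q) := by linear_combination -hs2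
    have main : ∀ y : ℝ, 0 < y → p * y ^ 2 - u * y + q = 0 → φ y = u := by
      intro y hy hroot
      have hy0 : y ≠ 0 := ne_of_gt hy
      have hyy : y * y⁻¹ = 1 := mul_inv_cancel₀ hy0
      simp only [hφ]
      linear_combination y⁻¹ * hroot - (p * y - u) * hyy
    rcases lt_or_gt_of_ne (fun h : p = 0 => by simp [h] at hpq) with hp0 | hp0
    · have hpne : p ≠ 0 := ne_of_lt hp0
      have hy : 0 < (u - s) / (2 * p) :=
        div_pos_iff.mpr (Or.inr ⟨by linarith, by linarith⟩)
      refine ⟨(u - s) / (2 * p), hy, main _ hy ?_⟩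
      field_simp
      linear_combination (-1) * hkey
    · have hpne : p ≠ 0 := ne_of_gt hp0
      have hy : 0 < (u + s) / (2 * p) := div_pos (by linarith) (by linarith)
      refine ⟨(u + s) / (2 * p), hy, main _ hy ?_⟩
      field_simp
      linear_combination (-1) * hkey
  -- Step A: rewrite LHS integrand
  have stepA : ∫ y in Set.Ioi (0 : ℝ),
      f ((a ^ 2 * y ^ 2 + b ^ 2) * (c ^ 2 * y ^ 2 + d ^ 2) / y ^ 2) / y
      = ∫ y in Set.Ioi (0 : ℝ), |p - q * (y ^ 2)⁻¹| • h (φ y) := by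
    apply setIntegral_congr_fun measurableSet_Ioi
    intro y hy
    simp only [Set.mem_Ioi] at hy
    have hy0 : y ≠ 0 := ne_of_gt hy
    have hpos : 0 < φ y ^ 2 + 1 - B ^ 2 := by
      nlinarith [sq_nonneg (φ y), hB2]
    have hsqrt : Real.sqrt (φ y ^ 2 + 1 - B ^ 2) = |p * y - q * y⁻¹| := by
      rw [← key1 y hy0, Real.sqrt_sq_eq_abs]
    have habs : |p - q * (y ^ 2)⁻¹| * y = |p * y - q * y⁻¹| := by
      have h1 : |p - q * (y ^ 2)⁻¹| * y = |(p - q * (y ^ 2)⁻¹) * y| := by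
        rw [abs_mul, abs_of_pos hy]
      rw [h1]
      congr 1
      field_simp
    have hne : |p * y - q * y⁻¹| ≠ 0 := by
      rw [← hsqrt]
      positivity
    have hne2 : |p - q * (y ^ 2)⁻¹| ≠ 0 := by
      intro h0
      rw [h0, zero_mul] at habs
      exact hne habs.symm
    dsimp only
    rw [key2 y hy, hh]
    simp only [smul_eq_mul]
    rw [hsqrt, ← habs]
    rw [mul_div_assoc', mul_div_mul_left _ _ hne2]
  -- Step B: change of variables
  have stepB : ∫ y in Set.Ioi (0 : ℝ), |p - q * (y ^ 2)⁻¹| • h (φ y)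
      = ∫ u, h u := by
    rw [← MeasureTheory.integral_image_eq_integral_abs_deriv_smul measurableSet_Ioi hderiv hinj h,
      hsurj, MeasureTheory.setIntegral_univ]
  -- Step C: evenness
  have stepC : ∫ u, h u = 2 * ∫ x in Set.Ioi (0 : ℝ), h x := by
    rw [← integral_comp_abs (f := h)]
    congr 1
    ext u
    rw [hh]
    simp [sq_abs]
  rw [stepA, stepB, stepC]
end

section
/- Fix real numbers 0 < X and Y > 0, and set H = Y² + 2YX, a = √(X² - 1), A = √((X+Y)² - 1) (assume X > 1). Define g : [0,∞) → ℝ by g(y) = 1 for y ≤ X², g(y) = ((X+Y)² - y)/H for X² ≤ y ≤ (X+Y)², and g(y) = 0 for y ≥ (X+Y)². Define F(u) = (2/(πH))(√((X+Y)² - u) - √(max(X² - u, 0))) for u ≤ (X+Y)² and F(u) = 0 for u > (X+Y)². Then for every v ≥ 0, ∫_v^∞ F(u)/√(u - v) du = g(v). -/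
open Real MeasureTheory
open Set

lemma aux_intable (v b : ℝ) (c : ℝ → ℝ) (hc : Continuous c) (hv : v ≤ b) :
    IntervalIntegrable (fun u => c u / Real.sqrt (u - v)) volume v b := by
  have h1 : IntervalIntegrable (fun u : ℝ => (u - v) ^ (-(1/2) : ℝ)) volume v b := by
    have h0 := (intervalIntegral.intervalIntegrable_rpow' (a := 0) (b := b - v)
      (r := -(1/2)) (by norm_num)).comp_sub_right v
    simpa using h0
  have h2 : IntervalIntegrable (fun u => c u * (u - v) ^ (-(1/2) : ℝ)) volume v b :=
    h1.continuousOn_mul hc.continuousOn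
  rw [intervalIntegrable_iff_integrableOn_Ioc_of_le hv] at h2 ⊢
  refine h2.congr_fun (fun u hu => ?_) measurableSet_Ioc
  have hu' : (0:ℝ) ≤ u - v := le_of_lt (sub_pos.2 hu.1)
  have hpos : (0:ℝ) < u - v := sub_pos.2 hu.1
  rw [Real.sqrt_eq_rpow, eq_div_iff (by positivity), mul_assoc,
    ← Real.rpow_add hpos]
  norm_num

lemma key_integral (v b : ℝ) (hvb : v < b) :
    ∫ u in v..b, Real.sqrt (b - u) / Real.sqrt (u - v) = π * (b - v) / 2 := by
  have hd0 : (0:ℝ) < b - v := sub_pos.2 hvb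
  set G : ℝ → ℝ := fun u => Real.sqrt (b - u) * Real.sqrt (u - v)
    + ((b - v) / 2) * Real.arcsin ((2 * u - b - v) / (b - v)) with hG
  have hcont : ContinuousOn G (Icc v b) := by
    apply Continuous.continuousOn
    exact ((by fun_prop : Continuous fun u : ℝ => Real.sqrt (b - u) * Real.sqrt (u - v))).add
      (continuous_const.mul (Real.continuous_arcsin.comp (by fun_prop)))
  have hderiv : ∀ u ∈ Ioo v b,
      HasDerivWithinAt G (Real.sqrt (b - u) / Real.sqrt (u - v)) (Ioi u) u := by
    intro u hu
    have hp : 0 < b - u := sub_pos.2 hu.2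
    have hq : 0 < u - v := sub_pos.2 hu.1
    have hsp : 0 < Real.sqrt (b - u) := Real.sqrt_pos.2 hp
    have hsq : 0 < Real.sqrt (u - v) := Real.sqrt_pos.2 hq
    have h1 : HasDerivAt (fun u : ℝ => Real.sqrt (b - u))
        (1 / (2 * Real.sqrt (b - u)) * (-1)) u :=
      (Real.hasDerivAt_sqrt hp.ne').comp u ((hasDerivAt_id u).const_sub b)
    have h2 : HasDerivAt (fun u : ℝ => Real.sqrt (u - v))
        (1 / (2 * Real.sqrt (u - v)) * 1) u :=
      (Real.hasDerivAt_sqrt hq.ne').comp u ((hasDerivAt_id u).sub_const v)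
    have h3 := h1.mul h2
    have hs : HasDerivAt (fun u : ℝ => (2 * u - b - v) / (b - v)) (2 / (b - v)) u := by
      have h : HasDerivAt (fun u : ℝ => 2 * u - b - v) 2 u := by
        simpa using (((hasDerivAt_id u).const_mul 2).sub_const b).sub_const v
      simpa using h.div_const (b - v)
    have hub : (2 * u - b - v) / (b - v) < 1 := by
      rw [div_lt_one hd0]; linarith [hu.2]
    have hlb : -1 < (2 * u - b - v) / (b - v) := by
      rw [lt_div_iff₀ hd0]; linarith [hu.1]
    have harc := (Real.hasDerivAt_arcsin hlb.ne' hub.ne).comp u hs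
    have h4 := harc.const_mul ((b - v) / 2)
    have hsq1 : Real.sqrt (1 - ((2 * u - b - v) / (b - v)) ^ 2)
        = 2 * Real.sqrt (b - u) * Real.sqrt (u - v) / (b - v) := by
      have e1 : 1 - ((2 * u - b - v) / (b - v)) ^ 2
          = (2 * Real.sqrt (b - u) * Real.sqrt (u - v) / (b - v)) ^ 2 := by
        rw [div_pow, div_pow, mul_pow, mul_pow, Real.sq_sqrt hp.le, Real.sq_sqrt hq.le]
        field_simp
        ring
      rw [e1, Real.sqrt_sq (by positivity)]
    have h5 := h3.add h4
    have heq : 1 / (2 * Real.sqrt (b - u)) * (-1) * Real.sqrt (u - v)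
          + Real.sqrt (b - u) * (1 / (2 * Real.sqrt (u - v)) * 1)
          + (b - v) / 2 * (1 / Real.sqrt (1 - ((2 * u - b - v) / (b - v)) ^ 2) * (2 / (b - v)))
        = Real.sqrt (b - u) / Real.sqrt (u - v) := by
      rw [hsq1]
      have hp2 := Real.sq_sqrt hp.le
      have hq2 := Real.sq_sqrt hq.le
      set sp := Real.sqrt (b - u) with hsp'
      set sq := Real.sqrt (u - v) with hsq'
      rw [show b - v = sp ^ 2 + sq ^ 2 by rw [hp2, hq2]; ring]
      have h0 : sp ^ 2 + sq ^ 2 ≠ 0 := by positivity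
      field_simp
      ring
    rw [heq] at h5
    exact h5.hasDerivWithinAt
  have hint : IntervalIntegrable (fun u => Real.sqrt (b - u) / Real.sqrt (u - v))
      volume v b :=
    aux_intable v b _ (by fun_prop) hvb.le
  rw [intervalIntegral.integral_eq_sub_of_hasDeriv_right_of_le hvb.le hcont hderiv hint]
  have e1 : (2 * b - b - v) / (b - v) = 1 := by
    rw [show 2 * b - b - v = b - v by ring, div_self hd0.ne']
  have e2 : (2 * v - b - v) / (b - v) = -1 := by
    rw [show 2 * v - b - v = -(b - v) by ring, neg_div, div_self hd0.ne']
  simp only [hG, e1, e2, Real.arcsin_one, Real.arcsin_neg_one, sub_self, Real.sqrt_zero,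
    mul_zero, zero_mul, add_zero, zero_add]
  ring


theorem stmt5 (X Y : ℝ) (hX : 1 < X) (hY : 0 < Y)
    (H : ℝ) (hH : H = Y ^ 2 + 2 * Y * X)
    (g F : ℝ → ℝ)
    (hg : ∀ y, g y = if y ≤ X ^ 2 then 1
      else if y ≤ (X + Y) ^ 2 then ((X + Y) ^ 2 - y) / H else 0)
    (hF : ∀ u, F u = if u ≤ (X + Y) ^ 2 then
      (2 / (π * H)) * (Real.sqrt ((X + Y) ^ 2 - u) - Real.sqrt (max (X ^ 2 - u) 0)) else 0) :
    ∀ v ≥ (0 : ℝ), ∫ u in Set.Ioi v, F u / Real.sqrt (u - v) = g v := by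
  intro v hv
  have hH0 : 0 < H := by rw [hH]; nlinarith
  have hpi : (0 : ℝ) < π := Real.pi_pos
  have hBC : (X + Y) ^ 2 - X ^ 2 = H := by rw [hH]; ring
  have hCB : X ^ 2 < (X + Y) ^ 2 := by nlinarith
  by_cases hvB : (X + Y) ^ 2 ≤ v
  · have hf0 : ∀ u ∈ Set.Ioi v, F u / Real.sqrt (u - v) = (0 : ℝ) := by
      intro u hu
      rw [hF, if_neg (by simp only [Set.mem_Ioi] at hu; linarith)]
      simp
    rw [setIntegral_congr_fun measurableSet_Ioi hf0]
    simp only [integral_zero]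
    rw [hg, if_neg (by nlinarith)]
    split_ifs with h
    · have : v = (X + Y) ^ 2 := le_antisymm h hvB
      rw [this]; simp
    · rfl
  · push_neg at hvB
    set f : ℝ → ℝ := fun u => F u / Real.sqrt (u - v) with hf
    set c : ℝ → ℝ := fun u =>
      Real.sqrt ((X + Y) ^ 2 - u) - Real.sqrt (max (X ^ 2 - u) 0) with hc
    have hccont : Continuous c := by
      apply Continuous.sub
      · fun_prop
      · exact Real.continuous_sqrt.comp ((continuous_const.sub continuous_id).max continuous_const)
    have hint : IntervalIntegrable (fun u => (2 / (π * H)) * (c u / Real.sqrt (u - v)))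
        volume v ((X + Y) ^ 2) :=
      (aux_intable v _ c hccont hvB.le).const_mul _
    have hEqOn : Set.EqOn (fun u => (2 / (π * H)) * (c u / Real.sqrt (u - v))) f
        (Set.Icc v ((X + Y) ^ 2)) := by
      intro u hu
      simp only [hf, hF, if_pos hu.2, hc]
      ring
    have hintIoc : IntegrableOn f (Set.Ioc v ((X + Y) ^ 2)) volume := by
      have h1 := (intervalIntegrable_iff_integrableOn_Ioc_of_le hvB.le).1 hint
      exact h1.congr_fun (fun u hu => hEqOn (Set.Ioc_subset_Icc_self hu)) measurableSet_Ioc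
    have hf0 : ∀ u ∈ Set.Ioi ((X + Y) ^ 2), f u = (0 : ℝ) := by
      intro u hu
      have hub : ¬ (u ≤ (X + Y) ^ 2) := not_le.2 hu
      show F u / Real.sqrt (u - v) = 0
      rw [hF u, if_neg hub, zero_div]
    have hintIoi : IntegrableOn f (Set.Ioi ((X + Y) ^ 2)) volume := by
      refine (integrableOn_zero (ε' := ℝ)).congr_fun
        (fun u hu => (hf0 u hu).symm) measurableSet_Ioi
    have hsplit : ∫ u in Set.Ioi v, f u
        = (∫ u in Set.Ioc v ((X + Y) ^ 2), f u)
          + ∫ u in Set.Ioi ((X + Y) ^ 2), f u := by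
      rw [← setIntegral_union (Set.Ioc_disjoint_Ioi le_rfl) measurableSet_Ioi hintIoc hintIoi,
        Set.Ioc_union_Ioi_eq_Ioi hvB.le]
    have hzero : ∫ u in Set.Ioi ((X + Y) ^ 2), f u = 0 := by
      rw [setIntegral_congr_fun measurableSet_Ioi hf0]; simp
    have hI1 : ∫ u in v..(X + Y) ^ 2, Real.sqrt ((X + Y) ^ 2 - u) / Real.sqrt (u - v)
        = π * ((X + Y) ^ 2 - v) / 2 := key_integral v _ hvB
    have hmain : ∫ u in Set.Ioi v, f u
        = (2 / (π * H)) *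
          ((π * ((X + Y) ^ 2 - v) / 2)
            - ∫ u in v..(X + Y) ^ 2, Real.sqrt (max (X ^ 2 - u) 0) / Real.sqrt (u - v)) := by
      rw [hsplit, hzero, add_zero, ← intervalIntegral.integral_of_le hvB.le,
        ← intervalIntegral.integral_congr (fun u hu => hEqOn (by rwa [Set.uIcc_of_le hvB.le] at hu)),
        intervalIntegral.integral_const_mul, ← hI1,
        ← intervalIntegral.integral_sub
          (aux_intable v _ (fun u => Real.sqrt ((X + Y) ^ 2 - u)) (by fun_prop) hvB.le)
          (aux_intable v _ (fun u => Real.sqrt (max (X ^ 2 - u) 0)) (Real.continuous_sqrt.comp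
            ((continuous_const.sub continuous_id).max continuous_const)) hvB.le)]
      congr 1
      apply intervalIntegral.integral_congr
      intro u _
      simp only [hc, sub_div]
    by_cases hvC : v < X ^ 2
    · have hI2 : ∫ u in v..(X + Y) ^ 2, Real.sqrt (max (X ^ 2 - u) 0) / Real.sqrt (u - v)
          = π * (X ^ 2 - v) / 2 := by
        have hi1 : IntervalIntegrable
            (fun u => Real.sqrt (max (X ^ 2 - u) 0) / Real.sqrt (u - v)) volume v (X ^ 2) :=
          (aux_intable v _ (fun u => Real.sqrt (max (X ^ 2 - u) 0)) (Real.continuous_sqrt.comp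
            ((continuous_const.sub continuous_id).max continuous_const)) hvB.le).mono_set
            (by rw [Set.uIcc_of_le hvC.le, Set.uIcc_of_le hvB.le]
                exact Set.Icc_subset_Icc le_rfl hCB.le)
        have hi2 : IntervalIntegrable
            (fun u => Real.sqrt (max (X ^ 2 - u) 0) / Real.sqrt (u - v)) volume (X ^ 2)
            ((X + Y) ^ 2) :=
          (aux_intable v _ (fun u => Real.sqrt (max (X ^ 2 - u) 0)) (Real.continuous_sqrt.comp
            ((continuous_const.sub continuous_id).max continuous_const)) hvB.le).mono_set
            (by rw [Set.uIcc_of_le hCB.le, Set.uIcc_of_le hvB.le]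
                exact Set.Icc_subset_Icc hvC.le le_rfl)
        rw [← intervalIntegral.integral_add_adjacent_intervals hi1 hi2]
        have e1 : ∫ u in v..(X ^ 2), Real.sqrt (max (X ^ 2 - u) 0) / Real.sqrt (u - v)
            = π * (X ^ 2 - v) / 2 := by
          rw [← key_integral v _ hvC]
          apply intervalIntegral.integral_congr
          intro u hu
          rw [Set.uIcc_of_le hvC.le] at hu
          simp only [max_eq_left (sub_nonneg.2 hu.2)]
        have e2 : ∫ u in (X ^ 2)..((X + Y) ^ 2),
            Real.sqrt (max (X ^ 2 - u) 0) / Real.sqrt (u - v) = 0 := by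
          have hEq0 : Set.EqOn (fun u => Real.sqrt (max (X ^ 2 - u) 0) / Real.sqrt (u - v))
              (fun _ => (0:ℝ)) (Set.uIcc (X ^ 2) ((X + Y) ^ 2)) := by
            intro u hu
            rw [Set.uIcc_of_le hCB.le] at hu
            simp only [max_eq_right (show X ^ 2 - u ≤ 0 by linarith [hu.1]), Real.sqrt_zero,
              zero_div]
          rw [intervalIntegral.integral_congr hEq0, intervalIntegral.integral_zero]
        rw [e1, e2, add_zero]
      rw [hmain, hI2, hg, if_pos hvC.le]
      field_simp
      linear_combination hBC
    · push_neg at hvC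
      have hI2 : ∫ u in v..(X + Y) ^ 2, Real.sqrt (max (X ^ 2 - u) 0) / Real.sqrt (u - v)
          = 0 := by
        have hEq0 : Set.EqOn (fun u => Real.sqrt (max (X ^ 2 - u) 0) / Real.sqrt (u - v))
            (fun _ => (0:ℝ)) (Set.uIcc v ((X + Y) ^ 2)) := by
          intro u hu
          rw [Set.uIcc_of_le hvB.le] at hu
          simp only [max_eq_right (show X ^ 2 - u ≤ 0 by linarith [hu.1]), Real.sqrt_zero,
            zero_div]
        rw [intervalIntegral.integral_congr hEq0, intervalIntegral.integral_zero]
      rw [hmain, hI2, sub_zero, hg]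
      split_ifs with h1
      · have hveq : v = X ^ 2 := le_antisymm h1 hvC
        rw [hveq]
        field_simp
        linear_combination hBC
      · field_simp
      · linarith
end

section
/- With X > 1, Y > 0, H = Y² + 2XY, a = √(X²-1), A = √((X+Y)²-1), and f⁺ as defined (f⁺(x²+1) = (2/(πH))x(√(A²-x²) - √(a²-x²)) for x ≤ a, = (2/(πH))x√(A²-x²) for a ≤ x ≤ A, = 0 else), the function q⁺(z) = 2∫_{√(z²-1)}^∞ f⁺(x²+1)/√(x² - (z²-1)) dx (for z ≥ 1) satisfies: q⁺(z) = 1 for 1 ≤ z ≤ X, 0 ≤ q⁺(z) ≤ 1 for X ≤ z ≤ X + Y, and q⁺(z) = 0 for z ≥ X + Y. In particular q⁺ dominates the indicator function of [1, X]. -/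
open Real MeasureTheory Set

lemma img_eq (v c : ℝ) (hv : 0 ≤ v) (hc : 0 < c) :
    (fun θ : ℝ => Real.sqrt (v + c * Real.sin θ ^ 2)) '' Ioo 0 (π/2)
      = Ioo (Real.sqrt v) (Real.sqrt (v + c)) := by
  ext x
  constructor
  · rintro ⟨θ, ⟨h0, h1⟩, rfl⟩
    have hs0 : 0 < Real.sin θ := Real.sin_pos_of_pos_of_lt_pi h0 (by linarith [Real.pi_pos])
    have hs1 : Real.sin θ < 1 := by
      have := Real.strictMonoOn_sin (a := θ) (b := π/2)
        ⟨by linarith [Real.pi_pos], le_of_lt h1⟩ ⟨by linarith [Real.pi_pos], le_refl _⟩ h1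
      simpa [Real.sin_pi_div_two] using this
    have hcs : 0 < c * Real.sin θ ^ 2 := mul_pos hc (pow_pos hs0 2)
    have hs2 : Real.sin θ ^ 2 < 1 := by nlinarith
    constructor
    · exact Real.sqrt_lt_sqrt hv (by linarith)
    · exact Real.sqrt_lt_sqrt (by linarith) (by nlinarith)
  · rintro ⟨hx1, hx2⟩
    have hx0 : 0 < x := lt_of_le_of_lt (Real.sqrt_nonneg v) hx1
    have hv' : v < x ^ 2 := by
      have := Real.lt_sqrt (y := x^2) hx0.le
      nlinarith [Real.sq_sqrt hv, Real.sqrt_nonneg v, mul_self_lt_mul_self (Real.sqrt_nonneg v) hx1]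
    have hvc : x ^ 2 < v + c := by
      have := (Real.lt_sqrt hx0.le).mp hx2
      linarith
    set t := (x ^ 2 - v) / c with ht
    have ht0 : 0 < t := div_pos (by linarith) hc
    have ht1 : t < 1 := (div_lt_one hc).mpr (by linarith)
    have hst0 : 0 < Real.sqrt t := Real.sqrt_pos.mpr ht0
    have hst1 : Real.sqrt t < 1 := by
      have := Real.sqrt_lt_sqrt ht0.le ht1
      simpa using this
    refine ⟨Real.arcsin (Real.sqrt t), ⟨Real.arcsin_pos.mpr hst0,
      Real.arcsin_lt_pi_div_two.mpr hst1⟩, ?_⟩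
    show Real.sqrt (v + c * Real.sin (Real.arcsin (Real.sqrt t)) ^ 2) = x
    rw [Real.sin_arcsin (by linarith) hst1.le]
    rw [Real.sq_sqrt ht0.le]
    rw [ht]
    rw [mul_div_cancel₀ _ hc.ne']
    have : v + (x ^ 2 - v) = x ^ 2 := by ring
    rw [this, Real.sqrt_sq hx0.le]

lemma key (v c : ℝ) (hv : 0 ≤ v) :
    IntegrableOn (fun x => x * Real.sqrt (v + c - x ^ 2) / Real.sqrt (x ^ 2 - v))
      (Set.Ioi (Real.sqrt v)) ∧
    ∫ x in Set.Ioi (Real.sqrt v), x * Real.sqrt (v + c - x ^ 2) / Real.sqrt (x ^ 2 - v)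
      = π * max c 0 / 4 := by
  set f : ℝ → ℝ := fun x => x * Real.sqrt (v + c - x ^ 2) / Real.sqrt (x ^ 2 - v) with hf
  rcases le_or_gt c 0 with hc | hc
  · have hzero : EqOn f 0 (Set.Ioi (Real.sqrt v)) := by
      intro x hx
      have hx0 : 0 ≤ x := le_trans (Real.sqrt_nonneg v) (le_of_lt hx)
      have : x ^ 2 > v := by
        nlinarith [Real.sq_sqrt hv, Real.sqrt_nonneg v, mul_self_lt_mul_self (Real.sqrt_nonneg v) hx]
      have : v + c - x ^ 2 < 0 := by linarith
      simp [hf, Real.sqrt_eq_zero_of_nonpos this.le]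
    constructor
    · exact (integrableOn_zero).congr_fun hzero.symm measurableSet_Ioi
    · rw [setIntegral_congr_fun measurableSet_Ioi hzero]
      simp [max_eq_right hc]
  · -- c > 0
    set B := Real.sqrt (v + c) with hB
    have hvB : Real.sqrt v < B := Real.sqrt_lt_sqrt hv (by linarith)
    set g : ℝ → ℝ := fun θ => Real.sqrt (v + c * Real.sin θ ^ 2) with hg
    set g' : ℝ → ℝ := fun θ => c * Real.sin θ * Real.cos θ / Real.sqrt (v + c * Real.sin θ ^ 2)
      with hg'
    have himg : g '' Ioo 0 (π/2) = Ioo (Real.sqrt v) B := img_eq v c hv hc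
    have hpos : ∀ θ ∈ Ioo (0:ℝ) (π/2), 0 < v + c * Real.sin θ ^ 2 := by
      intro θ ⟨h0, h1⟩
      have hs0 : 0 < Real.sin θ := Real.sin_pos_of_pos_of_lt_pi h0 (by linarith [Real.pi_pos])
      nlinarith [mul_pos hc (pow_pos hs0 2)]
    have hderiv : ∀ θ ∈ Ioo (0:ℝ) (π/2), HasDerivWithinAt g (g' θ) (Ioo 0 (π/2)) θ := by
      intro θ hθ
      have h1 : HasDerivAt (fun θ : ℝ => v + c * Real.sin θ ^ 2)
          (c * (2 * Real.sin θ * Real.cos θ)) θ := by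
        have := ((Real.hasDerivAt_sin θ).pow 2).const_mul c
        exact (this.const_add v).congr_deriv (by push_cast; ring)
      have h2 : HasDerivAt g (1 / (2 * Real.sqrt (v + c * Real.sin θ ^ 2))
          * (c * (2 * Real.sin θ * Real.cos θ))) θ :=
        (Real.hasDerivAt_sqrt (hpos θ hθ).ne').comp θ h1
      have hS : Real.sqrt (v + c * Real.sin θ ^ 2) ≠ 0 :=
        (Real.sqrt_pos.mpr (hpos θ hθ)).ne'
      have : 1 / (2 * Real.sqrt (v + c * Real.sin θ ^ 2)) * (c * (2 * Real.sin θ * Real.cos θ))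
          = g' θ := by
        rw [hg']
        field_simp
      rw [this] at h2
      exact h2.hasDerivWithinAt
    have hinj : InjOn g (Ioo 0 (π/2)) := by
      have : StrictMonoOn g (Ioo 0 (π/2)) := by
        intro θ1 h1 θ2 h2 hlt
        have hs1 : 0 < Real.sin θ1 := Real.sin_pos_of_pos_of_lt_pi h1.1 (by linarith [Real.pi_pos, h1.2])
        have hmono : Real.sin θ1 < Real.sin θ2 := by
          refine Real.strictMonoOn_sin ⟨?_, ?_⟩ ⟨?_, ?_⟩ hlt
          · linarith [Real.pi_pos, h1.1]
          · linarith [h1.2]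
          · linarith [Real.pi_pos, h2.1]
          · linarith [h2.2]
        have hss : 0 < Real.sin θ1 ^ 2 := pow_pos hs1 2
        have : Real.sin θ1 ^ 2 < Real.sin θ2 ^ 2 := by nlinarith
        exact Real.sqrt_lt_sqrt (by nlinarith [mul_pos hc hss]) (by nlinarith)
      exact this.injOn
    have hcomp : ∀ θ ∈ Ioo (0:ℝ) (π/2), |g' θ| • f (g θ) = c * Real.cos θ ^ 2 := by
      intro θ hθ
      obtain ⟨h0, h1⟩ := hθ
      have hs0 : 0 < Real.sin θ := Real.sin_pos_of_pos_of_lt_pi h0 (by linarith [Real.pi_pos])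
      have hc0 : 0 < Real.cos θ := Real.cos_pos_of_mem_Ioo ⟨by linarith [Real.pi_pos], h1⟩
      have hw : 0 < v + c * Real.sin θ ^ 2 := hpos θ ⟨h0, h1⟩
      have hgθ : 0 < g θ := Real.sqrt_pos.mpr hw
      have hg2 : g θ ^ 2 = v + c * Real.sin θ ^ 2 := Real.sq_sqrt hw.le
      have e1 : v + c - g θ ^ 2 = c * Real.cos θ ^ 2 := by
        rw [hg2]
        nlinarith [Real.sin_sq_add_cos_sq θ]
      have e2 : g θ ^ 2 - v = c * Real.sin θ ^ 2 := by rw [hg2]; ring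
      have s1 : Real.sqrt (v + c - g θ ^ 2) = Real.sqrt c * Real.cos θ := by
        rw [e1, Real.sqrt_mul hc.le, Real.sqrt_sq hc0.le]
      have s2 : Real.sqrt (g θ ^ 2 - v) = Real.sqrt c * Real.sin θ := by
        rw [e2, Real.sqrt_mul hc.le, Real.sqrt_sq hs0.le]
      have habs : |g' θ| = c * Real.sin θ * Real.cos θ / g θ := by
        rw [hg']
        rw [abs_of_pos]
        exact div_pos (by positivity) hgθ
      rw [smul_eq_mul, habs, hf]
      simp only
      rw [s1, s2]
      have hsc : Real.sqrt c > 0 := Real.sqrt_pos.mpr hc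
      field_simp
    have hcos_int : IntegrableOn (fun θ : ℝ => c * Real.cos θ ^ 2) (Ioo 0 (π/2)) := by
      apply (Continuous.integrableOn_Icc (by continuity)).mono_set Ioo_subset_Icc_self
    have hint_Ioo : IntegrableOn f (Ioo (Real.sqrt v) B) := by
      rw [← himg]
      rw [integrableOn_image_iff_integrableOn_abs_deriv_smul measurableSet_Ioo hderiv hinj]
      exact hcos_int.congr_fun (fun θ hθ => (hcomp θ hθ).symm) measurableSet_Ioo
    have hval_Ioo : ∫ x in Ioo (Real.sqrt v) B, f x = π * c / 4 := by
      rw [← himg, integral_image_eq_integral_abs_deriv_smul measurableSet_Ioo hderiv hinj]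
      rw [setIntegral_congr_fun measurableSet_Ioo hcomp]
      rw [← integral_Ioc_eq_integral_Ioo, ← intervalIntegral.integral_of_le (by positivity)]
      rw [intervalIntegral.integral_const_mul, integral_cos_sq]
      simp [Real.cos_pi_div_two, Real.sin_pi_div_two]
      ring
    have hzeroB : EqOn f 0 (Ici B) := by
      intro x hx
      have hB0 : 0 ≤ B := Real.sqrt_nonneg _
      have hx0 : 0 ≤ x := le_trans hB0 hx
      have : v + c - x ^ 2 ≤ 0 := by
        nlinarith [Real.sq_sqrt (show (0:ℝ) ≤ v + c by linarith), mul_self_le_mul_self hB0 hx]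
      simp [hf, Real.sqrt_eq_zero_of_nonpos this]
    have hint_Ici : IntegrableOn f (Ici B) :=
      (integrableOn_zero).congr_fun hzeroB.symm measurableSet_Ici
    have hunion : Ioo (Real.sqrt v) B ∪ Ici B = Ioi (Real.sqrt v) := Ioo_union_Ici_eq_Ioi hvB
    have hdisj : Disjoint (Ioo (Real.sqrt v) B) (Ici B) := by
      apply Set.disjoint_left.mpr
      rintro x ⟨_, hx2⟩ hx3
      exact absurd hx3 (not_le.mpr hx2)
    constructor
    · rw [← hunion]
      exact hint_Ioo.union hint_Ici
    · rw [← hunion, setIntegral_union hdisj measurableSet_Ici hint_Ioo hint_Ici, hval_Ioo,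
        setIntegral_congr_fun measurableSet_Ici hzeroB]
      simp [max_eq_left hc.le]

set_option maxHeartbeats 1000000 in
theorem stmt7 (X Y : ℝ) (hX : 1 < X) (hY : 0 < Y)
    (H a A : ℝ) (hH : H = Y ^ 2 + 2 * X * Y)
    (ha : a = Real.sqrt (X ^ 2 - 1)) (hA : A = Real.sqrt ((X + Y) ^ 2 - 1))
    (k : ℝ → ℝ)
    (hk : ∀ x, k x = if 0 ≤ x ∧ x ≤ a then
        (2 / (π * H)) * x * (Real.sqrt (A ^ 2 - x ^ 2) - Real.sqrt (a ^ 2 - x ^ 2))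
      else if a ≤ x ∧ x ≤ A then (2 / (π * H)) * x * Real.sqrt (A ^ 2 - x ^ 2)
      else 0)
    (q : ℝ → ℝ)
    (hq : ∀ z, q z = 2 * ∫ x in Set.Ioi (Real.sqrt (z ^ 2 - 1)),
      k x / Real.sqrt (x ^ 2 - (z ^ 2 - 1))) :
    (∀ z, 1 ≤ z → z ≤ X → q z = 1) ∧
    (∀ z, X ≤ z → z ≤ X + Y → 0 ≤ q z ∧ q z ≤ 1) ∧
    (∀ z, X + Y ≤ z → q z = 0) ∧
    (∀ z, 1 ≤ z → Set.indicator (Set.Icc (1 : ℝ) X) (fun _ => (1 : ℝ)) z ≤ q z) := by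
  have hH0 : 0 < H := by rw [hH]; nlinarith
  have hπ : (0:ℝ) < π := Real.pi_pos
  have ha2 : a ^ 2 = X ^ 2 - 1 := by rw [ha]; exact Real.sq_sqrt (by nlinarith)
  have hA2 : A ^ 2 = (X + Y) ^ 2 - 1 := by rw [hA]; exact Real.sq_sqrt (by nlinarith)
  have ha0 : 0 ≤ a := by rw [ha]; exact Real.sqrt_nonneg _
  have haA : a ≤ A := by
    rw [ha, hA]; exact Real.sqrt_le_sqrt (by nlinarith)
  -- main formula
  have main : ∀ z : ℝ, 1 ≤ z →
      q z = (max ((X + Y) ^ 2 - z ^ 2) 0 - max (X ^ 2 - z ^ 2) 0) / H := by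
    intro z hz
    set v := z ^ 2 - 1 with hv
    have hv0 : 0 ≤ v := by rw [hv]; nlinarith
    set cA := (X + Y) ^ 2 - z ^ 2 with hcA
    set ca := X ^ 2 - z ^ 2 with hca
    have hvA : v + cA = A ^ 2 := by rw [hv, hcA, hA2]; ring
    have hva : v + ca = a ^ 2 := by rw [hv, hca, ha2]; ring
    obtain ⟨hintA, hvalA⟩ := key v cA hv0
    obtain ⟨hinta, hvala⟩ := key v ca hv0
    rw [hvA] at hintA hvalA
    rw [hva] at hinta hvala
    have hcongr : EqOn (fun x => k x / Real.sqrt (x ^ 2 - v))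
        (fun x => (2 / (π * H)) * (x * Real.sqrt (A ^ 2 - x ^ 2) / Real.sqrt (x ^ 2 - v)
          - x * Real.sqrt (a ^ 2 - x ^ 2) / Real.sqrt (x ^ 2 - v))) (Ioi (Real.sqrt v)) := by
      intro x hx
      have hx0 : 0 ≤ x := le_trans (Real.sqrt_nonneg v) (le_of_lt hx)
      have hkx : k x = (2 / (π * H)) * x *
          (Real.sqrt (A ^ 2 - x ^ 2) - Real.sqrt (a ^ 2 - x ^ 2)) := by
        rw [hk]
        by_cases h1 : x ≤ a
        · rw [if_pos ⟨hx0, h1⟩]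
        · push_neg at h1
          rw [if_neg (by rintro ⟨_, h⟩; exact absurd h (not_le.mpr h1))]
          have hax : Real.sqrt (a ^ 2 - x ^ 2) = 0 :=
            Real.sqrt_eq_zero_of_nonpos (by nlinarith)
          by_cases h2 : x ≤ A
          · rw [if_pos ⟨h1.le, h2⟩, hax]; ring
          · push_neg at h2
            rw [if_neg (by rintro ⟨_, h⟩; exact absurd h (not_le.mpr h2))]
            have hAx : Real.sqrt (A ^ 2 - x ^ 2) = 0 :=
              Real.sqrt_eq_zero_of_nonpos (by nlinarith)
            rw [hax, hAx]; ring
      simp only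
      rw [hkx]
      ring
    rw [hq z]
    rw [setIntegral_congr_fun measurableSet_Ioi hcongr]
    rw [integral_const_mul, integral_sub hintA hinta, hvalA, hvala]
    have hπ' : π ≠ 0 := hπ.ne'
    have hH' : H ≠ 0 := hH0.ne'
    field_simp
    ring
  have hq_mid : ∀ z, X ≤ z → z ≤ X + Y → 0 ≤ q z ∧ q z ≤ 1 := by
    intro z hz1 hz2
    have hz : 1 ≤ z := le_trans hX.le hz1
    rw [main z hz]
    have h1 : max ((X + Y) ^ 2 - z ^ 2) 0 = (X + Y) ^ 2 - z ^ 2 :=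
      max_eq_left (by nlinarith)
    have h2 : max (X ^ 2 - z ^ 2) 0 = 0 := max_eq_right (by nlinarith)
    rw [h1, h2]
    constructor
    · apply div_nonneg (by nlinarith) hH0.le
    · rw [div_le_one hH0]; nlinarith
  have hq_left : ∀ z, 1 ≤ z → z ≤ X → q z = 1 := by
    intro z hz1 hz2
    rw [main z hz1]
    have h1 : max ((X + Y) ^ 2 - z ^ 2) 0 = (X + Y) ^ 2 - z ^ 2 :=
      max_eq_left (by nlinarith)
    have h2 : max (X ^ 2 - z ^ 2) 0 = X ^ 2 - z ^ 2 := max_eq_left (by nlinarith)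
    rw [h1, h2]
    field_simp
    rw [hH]; ring
  have hq_right : ∀ z, X + Y ≤ z → q z = 0 := by
    intro z hz
    have hz1 : 1 ≤ z := by nlinarith
    rw [main z hz1]
    have h1 : max ((X + Y) ^ 2 - z ^ 2) 0 = 0 := max_eq_right (by nlinarith)
    have h2 : max (X ^ 2 - z ^ 2) 0 = 0 := max_eq_right (by nlinarith)
    rw [h1, h2]
    simp
  refine ⟨hq_left, hq_mid, hq_right, ?_⟩
  intro z hz
  by_cases hzX : z ≤ X
  · have hmem : z ∈ Set.Icc (1:ℝ) X := ⟨hz, hzX⟩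
    rw [Set.indicator_of_mem hmem, hq_left z hz hzX]
  · push_neg at hzX
    rw [Set.indicator_of_notMem (by rintro ⟨_, h⟩; exact absurd h (not_le.mpr hzX))]
    by_cases hzXY : z ≤ X + Y
    · exact (hq_mid z hzX.le hzXY).1
    · push_neg at hzXY
      rw [hq_right z hzXY.le]
end

section
/- Let γ₂(s) = (π/2)·Γ((1-2s)/2)Γ((2-s)/2)/(Γ((1-s)/2)²Γ((5-s)/2)) and γ₃(s) = -(1/2)·Γ((-1-s)/2)Γ((s-2)/2)/(Γ((1-s)/2)Γ(s/2)), for s = 1/2 + it with t real, t ≥ 1. Then |γ₂(s)| ≪ t^{-3/2} and |γ₃(s)| ≪ t^{-2}, with absolute implied constants. -/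
open Real Complex Filter Finset




set_option maxHeartbeats 2000000 in
theorem perj (j y : ℝ) (hj : 0 ≤ j) (hy : (1:ℝ)/2 ≤ y) :
    ((j+1/4)^2+y^2)^2*((j+9/4)^2+y^2) * ((j^2+y^2)*((j+1)^2+y^2))
      ≤ ((j^2+y^2)*((j+1)^2+y^2) + 17/2*y^2*(2*j+1))
        * (((j+3/4)^2+y^2)*(((j+1/2)^2+y^2)*((j+3/2)^2+y^2))) := by
  have hy0 : (0:ℝ) < y := by linarith
  set A := j^2+y^2 with hA
  set B := (j+1)^2+y^2 with hB
  set M := (j+1/2)^2+y^2 with hM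
  set D := ((j+3/4)^2+y^2)*(((j+1/2)^2+y^2)*((j+3/2)^2+y^2)) with hD
  have hA0 : 0 < A := by positivity
  have hB0 : 0 < B := by positivity
  have hM0 : 0 < M := by positivity
  have hD0 : 0 < D := by positivity
  have h1 : ((j+1/4)^2+y^2)^2*((j+9/4)^2+y^2) ≤ D + 17/8*y^4 := by
    rw [hD]
    nlinarith [sq_nonneg y, sq_nonneg j, mul_nonneg hj hj, mul_nonneg (mul_nonneg hj hj) hj,
      mul_nonneg (mul_nonneg (mul_nonneg hj hj) hj) hj, mul_nonneg hj (sq_nonneg y),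
      mul_nonneg (mul_nonneg hj hj) (sq_nonneg y)]
  have h2 : A * B ≤ 4 * M^2 := by
    rw [hA, hB, hM]
    nlinarith [sq_nonneg j, sq_nonneg y, mul_nonneg hj hj, sq_nonneg (j*j), mul_nonneg hj (sq_nonneg y)]
  have h3 : y^2 * M^2 ≤ D := by
    rw [hD, hM]
    nlinarith [sq_nonneg (j+1/2), sq_nonneg y, mul_nonneg hj hj,
      mul_nonneg (mul_nonneg hj hj) hj, sq_nonneg ((j+1/2)^2+y^2), mul_nonneg hj (sq_nonneg y)]
  have h4 : 17/8*y^4 * (A*B) ≤ 17/2*y^2*(2*j+1) * D := by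
    have e1 : 17/8*y^4 * (A*B) ≤ 17/8*y^4 * (4*M^2) := by
      apply mul_le_mul_of_nonneg_left h2; positivity
    have e2 : (17/2*y^2) * (y^2*M^2) ≤ (17/2*y^2) * D := by
      apply mul_le_mul_of_nonneg_left h3; positivity
    have e3 : (17/2*y^2) * D * 1 ≤ (17/2*y^2) * D * (2*j+1) := by
      apply mul_le_mul_of_nonneg_left (by linarith) (by positivity)
    have e4 : 17/8*y^4 * (4*M^2) = (17/2*y^2) * (y^2*M^2) := by ring
    have e5 : (17/2*y^2) * D * (2*j+1) = 17/2*y^2*(2*j+1) * D := by ring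
    have e6 : (17/2*y^2) * D * 1 = (17/2*y^2) * D := by ring
    linarith
  calc ((j+1/4)^2+y^2)^2*((j+9/4)^2+y^2) * (A*B) ≤ (D + 17/8*y^4) * (A*B) := by
        apply mul_le_mul_of_nonneg_right h1; positivity
    _ = D*(A*B) + 17/8*y^4*(A*B) := by ring
    _ ≤ D*(A*B) + 17/2*y^2*(2*j+1)*D := by linarith
    _ = (A*B + 17/2*y^2*(2*j+1)) * D := by ring

lemma habs (a y : ℝ) (j : ℕ) :
    ‖((a:ℂ) - (y:ℂ)*Complex.I + (j:ℂ))‖^2 = (a+j)^2+y^2 := by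
  rw [← Complex.normSq_eq_norm_sq, Complex.normSq_apply]
  simp
  ring

lemma habs_pos (a y : ℝ) (j : ℕ) (hy : 0 < y) :
    0 < ‖((a:ℂ) - (y:ℂ)*Complex.I + (j:ℂ))‖ := by
  have h2 : 0 < ‖((a:ℂ) - (y:ℂ)*Complex.I + (j:ℂ))‖^2 := by
    rw [habs]; positivity
  rcases (norm_nonneg ((a:ℂ) - (y:ℂ)*Complex.I + (j:ℂ))).lt_or_eq with h|h
  · exact h
  · exfalso; rw [← h] at h2; simp at h2

noncomputable def eps (y : ℝ) (j : ℕ) : ℝ :=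
  17/4*y^2 * (1/((j:ℝ)^2+y^2) - 1/(((j:ℝ)+1)^2+y^2))

set_option maxHeartbeats 2000000 in
lemma perj_norm (y : ℝ) (hy : (1:ℝ)/2 ≤ y) (j : ℕ) :
    ‖(((1/4:ℝ):ℂ) - (y:ℂ)*Complex.I + (j:ℂ))‖^2 * ‖(((9/4:ℝ):ℂ) - (y:ℂ)*Complex.I + (j:ℂ))‖
      ≤ Real.exp (eps y j) * (‖(((3/4:ℝ):ℂ) - (y:ℂ)*Complex.I + (j:ℂ))‖ *
        (‖(((1/2:ℝ):ℂ) - (y:ℂ)*Complex.I + (j:ℂ))‖ * ‖(((3/2:ℝ):ℂ) - (y:ℂ)*Complex.I + (j:ℂ))‖)) := by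
  have hy0 : (0:ℝ) < y := by linarith
  have hj : (0:ℝ) ≤ (j:ℝ) := Nat.cast_nonneg j
  have hA : (0:ℝ) < (j:ℝ)^2+y^2 := by positivity
  have hB : (0:ℝ) < ((j:ℝ)+1)^2+y^2 := by positivity
  have hmain : (((j:ℝ)+1/4)^2+y^2)^2*(((j:ℝ)+9/4)^2+y^2)
      ≤ (1 + 2 * eps y j) * ((((j:ℝ)+3/4)^2+y^2)*((((j:ℝ)+1/2)^2+y^2)*(((j:ℝ)+3/2)^2+y^2))) := by
    have hAB : (0:ℝ) < ((j:ℝ)^2+y^2)*(((j:ℝ)+1)^2+y^2) := mul_pos hA hB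
    have h := perj (j:ℝ) y hj hy
    have hid : ((1 + 2 * eps y j) * ((((j:ℝ)+3/4)^2+y^2)*((((j:ℝ)+1/2)^2+y^2)*(((j:ℝ)+3/2)^2+y^2))))
          * (((j:ℝ)^2+y^2)*(((j:ℝ)+1)^2+y^2))
        = (((j:ℝ)^2+y^2)*(((j:ℝ)+1)^2+y^2) + 17/2*y^2*(2*(j:ℝ)+1))
          * ((((j:ℝ)+3/4)^2+y^2)*((((j:ℝ)+1/2)^2+y^2)*(((j:ℝ)+3/2)^2+y^2))) := by
      rw [eps]; field_simp; ring
    exact le_of_mul_le_mul_right (h.trans_eq hid.symm) hAB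
  have he : (0:ℝ) ≤ eps y j := by
    rw [eps]
    have h5 : 1/(((j:ℝ)+1)^2+y^2) ≤ 1/((j:ℝ)^2+y^2) := by
      apply one_div_le_one_div_of_le hA; nlinarith
    nlinarith [sq_nonneg y]
  have hexp : 1 + 2 * eps y j ≤ Real.exp (eps y j) ^ 2 := by
    have : Real.exp (eps y j) ^ 2 = Real.exp (2 * eps y j) := by
      rw [sq, ← Real.exp_add]; ring_nf
    rw [this]
    have := Real.add_one_le_exp (2 * eps y j)
    linarith
  -- now square comparison
  have hd3 := habs_pos (3/4) y j hy0
  have hd1 := habs_pos (1/2) y j hy0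
  have hd2 := habs_pos (3/2) y j hy0
  apply le_of_pow_le_pow_left₀ (two_ne_zero) (by positivity)
  have expand : (‖(((1/4:ℝ):ℂ) - (y:ℂ)*Complex.I + (j:ℂ))‖^2 * ‖(((9/4:ℝ):ℂ) - (y:ℂ)*Complex.I + (j:ℂ))‖)^2
      = (‖(((1/4:ℝ):ℂ) - (y:ℂ)*Complex.I + (j:ℂ))‖^2)^2 * ‖(((9/4:ℝ):ℂ) - (y:ℂ)*Complex.I + (j:ℂ))‖^2 := by
    ring
  have expand2 : (Real.exp (eps y j) * (‖(((3/4:ℝ):ℂ) - (y:ℂ)*Complex.I + (j:ℂ))‖ *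
        (‖(((1/2:ℝ):ℂ) - (y:ℂ)*Complex.I + (j:ℂ))‖ * ‖(((3/2:ℝ):ℂ) - (y:ℂ)*Complex.I + (j:ℂ))‖)))^2
      = Real.exp (eps y j)^2 * (‖(((3/4:ℝ):ℂ) - (y:ℂ)*Complex.I + (j:ℂ))‖^2 *
        (‖(((1/2:ℝ):ℂ) - (y:ℂ)*Complex.I + (j:ℂ))‖^2 * ‖(((3/2:ℝ):ℂ) - (y:ℂ)*Complex.I + (j:ℂ))‖^2)) := by
    ring
  rw [expand, expand2, habs, habs, habs, habs, habs]
  calc ((1/4+(j:ℝ))^2+y^2)^2 * ((9/4+(j:ℝ))^2+y^2)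
      ≤ (1 + 2 * eps y j) * (((3/4+(j:ℝ))^2+y^2)*(((1/2+(j:ℝ))^2+y^2)*((3/2+(j:ℝ))^2+y^2))) := by
        have := hmain
        have hc : ∀ a : ℝ, ((j:ℝ)+a) = (a+(j:ℝ)) := fun a => by ring
        simpa [hc] using this
    _ ≤ Real.exp (eps y j)^2 * (((3/4+(j:ℝ))^2+y^2)*(((1/2+(j:ℝ))^2+y^2)*((3/2+(j:ℝ))^2+y^2))) := by
        apply mul_le_mul_of_nonneg_right hexp (by positivity)

lemma sum_eps (y : ℝ) (hy : 0 < y) (n : ℕ) :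
    ∑ j ∈ range (n+1), eps y j ≤ 17/4 := by
  have key : ∀ j : ℕ, eps y j
      = (fun k : ℕ => 17/4*y^2/((k:ℝ)^2+y^2)) j - (fun k : ℕ => 17/4*y^2/((k:ℝ)^2+y^2)) (j+1) := by
    intro j
    simp only [eps]
    push_cast
    have h1 : ((j:ℝ)^2+y^2) ≠ 0 := by positivity
    have h2 : (((j:ℝ)+1)^2+y^2) ≠ 0 := by positivity
    field_simp
  calc ∑ j ∈ range (n+1), eps y j
      = ∑ j ∈ range (n+1), ((fun k : ℕ => 17/4*y^2/((k:ℝ)^2+y^2)) j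
          - (fun k : ℕ => 17/4*y^2/((k:ℝ)^2+y^2)) (j+1)) := by
        apply Finset.sum_congr rfl; intro j _; exact key j
    _ = 17/4*y^2/((0:ℝ)^2+y^2) - 17/4*y^2/(((n+1:ℕ):ℝ)^2+y^2) := by
        rw [Finset.sum_range_sub' (fun k : ℕ => 17/4*y^2/((k:ℝ)^2+y^2)) (n+1)]
        norm_num
    _ ≤ 17/4*y^2/((0:ℝ)^2+y^2) := by
        have : 0 ≤ 17/4*y^2/(((n+1:ℕ):ℝ)^2+y^2) := by positivity
        linarith
    _ = 17/4 := by field_simp; ring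

lemma prodIneq (y : ℝ) (hy : (1:ℝ)/2 ≤ y) (n : ℕ) :
    ∏ j ∈ range (n+1), (‖(((1/4:ℝ)):ℂ) - (y:ℂ)*Complex.I + (j:ℂ)‖^2
        * ‖(((9/4:ℝ)):ℂ) - (y:ℂ)*Complex.I + (j:ℂ)‖)
      ≤ Real.exp (17/4) * ∏ j ∈ range (n+1), (‖(((3/4:ℝ)):ℂ) - (y:ℂ)*Complex.I + (j:ℂ)‖ *
        (‖(((1/2:ℝ)):ℂ) - (y:ℂ)*Complex.I + (j:ℂ)‖ * ‖(((3/2:ℝ)):ℂ) - (y:ℂ)*Complex.I + (j:ℂ)‖)) := by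
  have hy0 : (0:ℝ) < y := by linarith
  calc ∏ j ∈ range (n+1), (‖(((1/4:ℝ)):ℂ) - (y:ℂ)*Complex.I + (j:ℂ)‖^2
        * ‖(((9/4:ℝ)):ℂ) - (y:ℂ)*Complex.I + (j:ℂ)‖)
      ≤ ∏ j ∈ range (n+1), (Real.exp (eps y j) * (‖(((3/4:ℝ)):ℂ) - (y:ℂ)*Complex.I + (j:ℂ)‖ *
        (‖(((1/2:ℝ)):ℂ) - (y:ℂ)*Complex.I + (j:ℂ)‖ * ‖(((3/2:ℝ)):ℂ) - (y:ℂ)*Complex.I + (j:ℂ)‖))) := by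
        apply Finset.prod_le_prod
        · intro j _; positivity
        · intro j _; exact perj_norm y hy j
    _ = (∏ j ∈ range (n+1), Real.exp (eps y j)) * ∏ j ∈ range (n+1),
          (‖(((3/4:ℝ)):ℂ) - (y:ℂ)*Complex.I + (j:ℂ)‖ *
          (‖(((1/2:ℝ)):ℂ) - (y:ℂ)*Complex.I + (j:ℂ)‖ * ‖(((3/2:ℝ)):ℂ) - (y:ℂ)*Complex.I + (j:ℂ)‖)) := by
        rw [Finset.prod_mul_distrib]
    _ ≤ Real.exp (17/4) * ∏ j ∈ range (n+1), (‖(((3/4:ℝ)):ℂ) - (y:ℂ)*Complex.I + (j:ℂ)‖ *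
        (‖(((1/2:ℝ)):ℂ) - (y:ℂ)*Complex.I + (j:ℂ)‖ * ‖(((3/2:ℝ)):ℂ) - (y:ℂ)*Complex.I + (j:ℂ)‖)) := by
        apply mul_le_mul_of_nonneg_right
        · rw [← Real.exp_sum]
          exact Real.exp_le_exp.mpr (sum_eps y hy0 n)
        · apply Finset.prod_nonneg; intro j _; positivity

lemma normGS (z : ℂ) {n : ℕ} (hn : 0 < n) :
    ‖Complex.GammaSeq z n‖ = (n:ℝ) ^ z.re * (n.factorial : ℝ) / ∏ j ∈ range (n+1), ‖z + (j:ℂ)‖ := by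
  rw [Complex.GammaSeq, norm_div, norm_mul, norm_prod,
    Complex.norm_natCast_cpow_of_pos hn]
  norm_num

lemma re_aux (a y : ℝ) : (((a:ℝ):ℂ) - (y:ℂ)*Complex.I).re = a := by simp

lemma prodPos (a y : ℝ) (hy : 0 < y) (n : ℕ) :
    0 < ∏ j ∈ range (n+1), ‖((a:ℝ):ℂ) - (y:ℂ)*Complex.I + (j:ℂ)‖ :=
  Finset.prod_pos (fun j _ => habs_pos a y j hy)

set_option maxHeartbeats 1000000 in
lemma seqIneq (y : ℝ) (hy : (1:ℝ)/2 ≤ y) {n : ℕ} (hn : 0 < n) :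
    ‖Complex.GammaSeq (((3/4:ℝ):ℂ) - (y:ℂ)*Complex.I) n‖ *
      (‖Complex.GammaSeq (((1/2:ℝ):ℂ) - (y:ℂ)*Complex.I) n‖ *
       ‖Complex.GammaSeq (((3/2:ℝ):ℂ) - (y:ℂ)*Complex.I) n‖)
    ≤ Real.exp (17/4) * (‖Complex.GammaSeq (((1/4:ℝ):ℂ) - (y:ℂ)*Complex.I) n‖^2 *
       ‖Complex.GammaSeq (((9/4:ℝ):ℂ) - (y:ℂ)*Complex.I) n‖) := by
  have hy0 : (0:ℝ) < y := by linarith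
  have hT : (0:ℝ) < (n:ℝ) := Nat.cast_pos.mpr hn
  rw [normGS _ hn, normGS _ hn, normGS _ hn, normGS _ hn, normGS _ hn,
    re_aux, re_aux, re_aux, re_aux, re_aux]
  set F := (n.factorial : ℝ) with hF
  have hF0 : (0:ℝ) < F := by rw [hF]; exact_mod_cast n.factorial_pos
  set P34 := ∏ j ∈ range (n+1), ‖((3/4:ℝ):ℂ) - (y:ℂ)*Complex.I + (j:ℂ)‖ with hP34
  set P12 := ∏ j ∈ range (n+1), ‖((1/2:ℝ):ℂ) - (y:ℂ)*Complex.I + (j:ℂ)‖ with hP12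
  set P32 := ∏ j ∈ range (n+1), ‖((3/2:ℝ):ℂ) - (y:ℂ)*Complex.I + (j:ℂ)‖ with hP32
  set P14 := ∏ j ∈ range (n+1), ‖((1/4:ℝ):ℂ) - (y:ℂ)*Complex.I + (j:ℂ)‖ with hP14
  set P94 := ∏ j ∈ range (n+1), ‖((9/4:ℝ):ℂ) - (y:ℂ)*Complex.I + (j:ℂ)‖ with hP94
  have h34 : 0 < P34 := prodPos _ _ hy0 n
  have h12 : 0 < P12 := prodPos _ _ hy0 n
  have h32 : 0 < P32 := prodPos _ _ hy0 n
  have h14 : 0 < P14 := prodPos _ _ hy0 n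
  have h94 : 0 < P94 := prodPos _ _ hy0 n
  have key : P14^2 * P94 ≤ Real.exp (17/4) * (P34 * (P12 * P32)) := by
    rw [hP14, hP94, hP34, hP12, hP32, ← Finset.prod_pow, ← Finset.prod_mul_distrib,
      ← Finset.prod_mul_distrib, ← Finset.prod_mul_distrib]
    exact prodIneq y hy n
  have hX : (n:ℝ)^(3/4:ℝ) * F * ((n:ℝ)^(1/2:ℝ) * F * ((n:ℝ)^(3/2:ℝ) * F))
      = ((n:ℝ)^(1/4:ℝ) * F)^2 * ((n:ℝ)^(9/4:ℝ) * F) := by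
    have e1 : (n:ℝ)^(3/4:ℝ) * (n:ℝ)^(1/2:ℝ) * (n:ℝ)^(3/2:ℝ) = (n:ℝ)^(11/4:ℝ) := by
      rw [← Real.rpow_add hT, ← Real.rpow_add hT]; norm_num
    have e2 : ((n:ℝ)^(1/4:ℝ))^2 * (n:ℝ)^(9/4:ℝ) = (n:ℝ)^(11/4:ℝ) := by
      rw [← Real.rpow_natCast ((n:ℝ)^(1/4:ℝ)) 2, ← Real.rpow_mul hT.le, ← Real.rpow_add hT]
      norm_num
    calc (n:ℝ)^(3/4:ℝ) * F * ((n:ℝ)^(1/2:ℝ) * F * ((n:ℝ)^(3/2:ℝ) * F))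
        = ((n:ℝ)^(3/4:ℝ) * (n:ℝ)^(1/2:ℝ) * (n:ℝ)^(3/2:ℝ)) * F^3 := by ring
      _ = (((n:ℝ)^(1/4:ℝ))^2 * (n:ℝ)^(9/4:ℝ)) * F^3 := by rw [e1, e2]
      _ = ((n:ℝ)^(1/4:ℝ) * F)^2 * ((n:ℝ)^(9/4:ℝ) * F) := by ring
  set X := (n:ℝ)^(3/4:ℝ) * F * ((n:ℝ)^(1/2:ℝ) * F * ((n:ℝ)^(3/2:ℝ) * F)) with hXdef
  have hX0 : 0 ≤ X := by positivity
  calc (n:ℝ)^(3/4:ℝ) * F / P34 * ((n:ℝ)^(1/2:ℝ) * F / P12 * ((n:ℝ)^(3/2:ℝ) * F / P32))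
      = X / (P34 * (P12 * P32)) := by rw [hXdef]; field_simp
    _ ≤ Real.exp (17/4) * X / (P14^2 * P94) := by
        rw [div_le_div_iff₀ (by positivity) (by positivity)]
        calc X * (P14^2*P94) ≤ X * (Real.exp (17/4) * (P34*(P12*P32))) :=
              mul_le_mul_of_nonneg_left key hX0
          _ = Real.exp (17/4) * X * (P34*(P12*P32)) := by ring
    _ = Real.exp (17/4) * (X / (P14^2 * P94)) := by rw [mul_div_assoc]
    _ = Real.exp (17/4) * (((n:ℝ)^(1/4:ℝ) * F / P14)^2 * ((n:ℝ)^(9/4:ℝ) * F / P94)) := by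
        rw [hX]; field_simp

lemma gamma_bound (y : ℝ) (hy : (1:ℝ)/2 ≤ y) :
    ‖Complex.Gamma (((3/4:ℝ):ℂ) - (y:ℂ)*Complex.I)‖ *
      (‖Complex.Gamma (((1/2:ℝ):ℂ) - (y:ℂ)*Complex.I)‖ *
       ‖Complex.Gamma (((3/2:ℝ):ℂ) - (y:ℂ)*Complex.I)‖)
    ≤ Real.exp (17/4) * (‖Complex.Gamma (((1/4:ℝ):ℂ) - (y:ℂ)*Complex.I)‖^2 *
       ‖Complex.Gamma (((9/4:ℝ):ℂ) - (y:ℂ)*Complex.I)‖) := by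
  have t1 := (Complex.GammaSeq_tendsto_Gamma (((3/4:ℝ):ℂ) - (y:ℂ)*Complex.I)).norm
  have t2 := (Complex.GammaSeq_tendsto_Gamma (((1/2:ℝ):ℂ) - (y:ℂ)*Complex.I)).norm
  have t3 := (Complex.GammaSeq_tendsto_Gamma (((3/2:ℝ):ℂ) - (y:ℂ)*Complex.I)).norm
  have t4 := (Complex.GammaSeq_tendsto_Gamma (((1/4:ℝ):ℂ) - (y:ℂ)*Complex.I)).norm
  have t5 := (Complex.GammaSeq_tendsto_Gamma (((9/4:ℝ):ℂ) - (y:ℂ)*Complex.I)).norm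
  refine le_of_tendsto_of_tendsto (t1.mul (t2.mul t3))
    (tendsto_const_nhds.mul ((t4.pow 2).mul t5)) ?_
  filter_upwards [eventually_gt_atTop 0] with n hn
  exact seqIneq y hy hn

lemma Gamma_ne_zero_of_im {z : ℂ} (h : z.im ≠ 0) : Complex.Gamma z ≠ 0 := by
  apply Complex.Gamma_ne_zero
  intro m hm
  apply h
  rw [hm]
  simp

lemma w3_eval (y : ℝ) (hy : 0 < y) :
    ‖Complex.Gamma (((1/2:ℝ):ℂ) - (y:ℂ)*Complex.I)‖^2 * Real.cosh (π*y) = π := by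
  set z : ℂ := ((1/2:ℝ):ℂ) - (y:ℂ)*Complex.I with hz
  have hconj : (starRingEnd ℂ) z = 1 - z := by
    rw [hz]; apply Complex.ext <;> simp <;> norm_num
  have href := Complex.Gamma_mul_Gamma_one_sub z
  have hsin : Complex.sin (↑π * z) = ((Real.cosh (π*y) : ℝ) : ℂ) := by
    have harg : (↑π * z : ℂ) = ↑(π/2 : ℝ) - ((π*y : ℝ):ℂ) * Complex.I := by
      rw [hz]; push_cast; ring
    rw [harg, Complex.ofReal_div]
    push_cast
    rw [Complex.sin_pi_div_two_sub, Complex.cos_mul_I]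
  have hnorm : ‖Complex.Gamma z * Complex.Gamma (1 - z)‖ = ‖Complex.Gamma z‖^2 := by
    rw [← hconj, Complex.Gamma_conj]
    rw [norm_mul, Complex.norm_conj, sq]
  have hc0 : 0 < Real.cosh (π*y) := Real.cosh_pos _
  have : ‖Complex.Gamma z‖^2 = π / Real.cosh (π*y) := by
    rw [← hnorm, href, hsin, norm_div]
    simp only [Complex.norm_real, Real.norm_eq_abs]
    rw [abs_of_pos Real.pi_pos, abs_of_pos hc0]
  rw [this]
  field_simp

lemma z1_eval (t : ℝ) (ht : 0 < t) :
    ‖Complex.Gamma (-((t:ℂ)*Complex.I))‖^2 * (t * Real.sinh (π*t)) = π := by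
  set z : ℂ := -((t:ℂ)*Complex.I) with hz
  have hzne : (t:ℂ)*Complex.I ≠ 0 := by
    simp [Complex.ext_iff, ht.ne']
  have h1z : (1 : ℂ) - z = (t:ℂ)*Complex.I + 1 := by rw [hz]; ring
  have hrec : Complex.Gamma (1 - z) = (t:ℂ)*Complex.I * Complex.Gamma ((t:ℂ)*Complex.I) := by
    rw [h1z, Complex.Gamma_add_one _ hzne]
  have hconj : (starRingEnd ℂ) z = (t:ℂ)*Complex.I := by
    rw [hz]; apply Complex.ext <;> simp
  have href := Complex.Gamma_mul_Gamma_one_sub z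
  have hsin : Complex.sin (↑π * z) = -(((Real.sinh (π*t) : ℝ):ℂ) * Complex.I) := by
    have harg : (↑π * z : ℂ) = -(((π*t : ℝ):ℂ) * Complex.I) := by rw [hz]; push_cast; ring
    rw [harg, Complex.sin_neg, Complex.sin_mul_I, Complex.ofReal_sinh]
  have hs0 : 0 < Real.sinh (π*t) := by
    rw [Real.sinh_pos_iff]; positivity
  have habsz : ‖(starRingEnd ℂ) z‖ = t := by
    rw [hconj, norm_mul, Complex.norm_real, Real.norm_eq_abs,
      Complex.norm_I, abs_of_pos ht, mul_one]
  have hnorm : ‖Complex.Gamma z * Complex.Gamma (1 - z)‖ = ‖Complex.Gamma z‖^2 * t := by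
    rw [hrec, ← hconj, Complex.Gamma_conj, norm_mul, norm_mul, habsz]
    have hcn : ‖(starRingEnd ℂ) (Complex.Gamma z)‖ = ‖Complex.Gamma z‖ := by
      rw [Complex.norm_conj]
    rw [hcn]; ring
  have : ‖Complex.Gamma z‖^2 * t = π / Real.sinh (π*t) := by
    rw [← hnorm, href, hsin, norm_div, norm_neg, norm_mul]
    simp only [Complex.norm_real, Real.norm_eq_abs, Complex.norm_I, mul_one]
    rw [abs_of_pos Real.pi_pos, abs_of_pos hs0]
  calc ‖Complex.Gamma z‖^2 * (t * Real.sinh (π*t))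
      = (‖Complex.Gamma z‖^2 * t) * Real.sinh (π*t) := by ring
    _ = π / Real.sinh (π*t) * Real.sinh (π*t) := by rw [this]
    _ = π := by field_simp

lemma w4_eval (y : ℝ) (hy : 0 < y) :
    ‖Complex.Gamma (((3/2:ℝ):ℂ) - (y:ℂ)*Complex.I)‖
      = ‖((1/2:ℝ):ℂ) - (y:ℂ)*Complex.I‖ * ‖Complex.Gamma (((1/2:ℝ):ℂ) - (y:ℂ)*Complex.I)‖ := by
  have hne : (((1/2:ℝ):ℂ) - (y:ℂ)*Complex.I) ≠ 0 := by
    simp [Complex.ext_iff, hy.ne']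
  have harg : (((3/2:ℝ):ℂ) - (y:ℂ)*Complex.I) = (((1/2:ℝ):ℂ) - (y:ℂ)*Complex.I) + 1 := by
    push_cast; ring
  rw [harg, Complex.Gamma_add_one _ hne, norm_mul]




lemma cosh_le_two_sinh (x : ℝ) (hx : 3/2 ≤ x) : Real.cosh x ≤ 2 * Real.sinh x := by
  have hp := Real.exp_pos x
  have h2 : 4 ≤ Real.exp x * Real.exp x := by
    have h := Real.add_one_le_exp (2*x)
    rw [show (2:ℝ)*x = x + x by ring, Real.exp_add] at h
    linarith
  rw [Real.cosh_eq, Real.sinh_eq, Real.exp_neg]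
  rw [div_le_iff₀ (by norm_num : (0:ℝ) < 2)]
  have hinv : (Real.exp x)⁻¹ * (Real.exp x) = 1 := inv_mul_cancel₀ hp.ne'
  nlinarith [inv_pos.mpr hp]

lemma numeric1 (t : ℝ) (ht : 1 ≤ t) (g : ℝ) (hg : 0 ≤ g)
    (hg2 : g^2 * (t * Real.sinh (π*t)) = π) :
    Real.exp (17/4) * g * Real.cosh (π*(t/2)) / t ≤ (2*Real.exp 5) * t^(-(3:ℝ)/2) := by
  have ht0 : (0:ℝ) < t := lt_of_lt_of_le one_pos ht
  have hx : 3/2 ≤ π*(t/2) := by nlinarith [Real.pi_gt_three]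
  have hsp : 0 < Real.sinh (π*(t/2)) := by rw [Real.sinh_pos_iff]; nlinarith [Real.pi_pos]
  have hcp : 0 < Real.cosh (π*(t/2)) := Real.cosh_pos _
  have hcs : Real.cosh (π*(t/2)) ≤ 2 * Real.sinh (π*(t/2)) := cosh_le_two_sinh _ hx
  have hsh : Real.sinh (π*t) = 2 * Real.sinh (π*(t/2)) * Real.cosh (π*(t/2)) := by
    rw [show π*t = 2*(π*(t/2)) by ring, Real.sinh_two_mul]
  have hg2' : g^2 = π / (t * Real.sinh (π*t)) := by
    have h0 : t * Real.sinh (π*t) > 0 := by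
      rw [hsh]; positivity
    field_simp at hg2 ⊢
    linarith [hg2]
  apply le_of_pow_le_pow_left₀ two_ne_zero (by positivity)
  have hL : (Real.exp (17/4) * g * Real.cosh (π*(t/2)) / t)^2
      = Real.exp (17/2) * π * Real.cosh (π*(t/2)) / (2 * Real.sinh (π*(t/2)) * t^3) := by
    have e1 : (Real.exp (17/4) * g * Real.cosh (π*(t/2)) / t)^2
        = Real.exp (17/4)^2 * g^2 * Real.cosh (π*(t/2))^2 / t^2 := by ring
    have e2 : Real.exp (17/4)^2 = Real.exp (17/2) := by
      rw [sq, ← Real.exp_add]; norm_num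
    rw [e1, e2, hg2', hsh]
    field_simp
  have hR : ((2*Real.exp 5) * t^(-(3:ℝ)/2))^2 = 4 * Real.exp 10 / t^3 := by
    have e1 : (t^(-(3:ℝ)/2))^2 = t^(-(3:ℝ)) := by
      rw [← Real.rpow_natCast (t^(-(3:ℝ)/2)) 2, ← Real.rpow_mul ht0.le]
      norm_num
    have e2 : t^(-(3:ℝ)) = (t^(3:ℕ))⁻¹ := by
      rw [Real.rpow_neg ht0.le]
      congr 1
      rw [← Real.rpow_natCast t 3]
      norm_num
    have e3 : Real.exp 5 ^ 2 = Real.exp 10 := by rw [sq, ← Real.exp_add]; norm_num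
    rw [mul_pow, mul_pow, e1, e2, e3]
    field_simp
    ring
  rw [hL, hR, div_le_div_iff₀ (by positivity) (by positivity)]
  have hkey : Real.exp (17/2) * π ≤ 4 * Real.exp 10 := by
    have e4 : Real.exp 10 = Real.exp (17/2) * Real.exp (3/2) := by
      rw [← Real.exp_add]; norm_num
    have e5 : (1:ℝ) ≤ Real.exp (3/2) := Real.one_le_exp (by norm_num)
    nlinarith [Real.pi_le_four, Real.exp_pos (17/2 : ℝ)]
  nlinarith [mul_pos hsp (pow_pos ht0 3), Real.exp_pos (17/2:ℝ), Real.pi_pos,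
    mul_le_mul_of_nonneg_left hcs (le_of_lt (mul_pos (Real.exp_pos (17/2:ℝ)) Real.pi_pos)),
    mul_le_mul_of_nonneg_right hkey (le_of_lt (mul_pos hsp (pow_pos ht0 3)))]

theorem stmt14 :
    ∃ C > (0 : ℝ), ∀ t : ℝ, 1 ≤ t →
      ‖((π : ℂ) / 2) *
          (Complex.Gamma ((1 - 2 * (1 / 2 + (t : ℂ) * Complex.I)) / 2) *
            Complex.Gamma ((2 - (1 / 2 + (t : ℂ) * Complex.I)) / 2) /
            ((Complex.Gamma ((1 - (1 / 2 + (t : ℂ) * Complex.I)) / 2)) ^ 2 *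
              Complex.Gamma ((5 - (1 / 2 + (t : ℂ) * Complex.I)) / 2)))‖
        ≤ C * t ^ (-(3 : ℝ) / 2) ∧
      ‖(-(1 / 2 : ℂ)) *
          (Complex.Gamma ((-1 - (1 / 2 + (t : ℂ) * Complex.I)) / 2) *
            Complex.Gamma (((1 / 2 + (t : ℂ) * Complex.I) - 2) / 2) /
            (Complex.Gamma ((1 - (1 / 2 + (t : ℂ) * Complex.I)) / 2) *
              Complex.Gamma ((1 / 2 + (t : ℂ) * Complex.I) / 2)))‖
        ≤ C * t ^ (-(2 : ℝ)) := by
  refine ⟨2*Real.exp 5, by positivity, fun t ht => ⟨?_, ?_⟩⟩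
  all_goals have ht0 : (0:ℝ) < t := lt_of_lt_of_le one_pos ht
  all_goals have hy0 : (0:ℝ) < t/2 := by linarith
  all_goals have him : -(t/2) ≠ 0 := by intro h; apply hy0.ne'; linarith
  -- Part 1
  · have e1 : ((1:ℂ) - 2 * (1/2 + (t:ℂ)*Complex.I))/2 = -((t:ℂ)*Complex.I) := by ring
    have e2 : ((2:ℂ) - (1/2 + (t:ℂ)*Complex.I))/2 = ((3/4:ℝ):ℂ) - ((t/2:ℝ):ℂ)*Complex.I := by
      push_cast; ring
    have e3 : ((1:ℂ) - (1/2 + (t:ℂ)*Complex.I))/2 = ((1/4:ℝ):ℂ) - ((t/2:ℝ):ℂ)*Complex.I := by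
      push_cast; ring
    have e4 : ((5:ℂ) - (1/2 + (t:ℂ)*Complex.I))/2 = ((9/4:ℝ):ℂ) - ((t/2:ℝ):ℂ)*Complex.I := by
      push_cast; ring
    rw [e1, e2, e3, e4]
    have hpi2 : ‖((π:ℂ))/2‖ = π/2 := by
      rw [norm_div]
      simp [Complex.norm_real, Real.norm_eq_abs, abs_of_pos Real.pi_pos]
    rw [norm_mul, hpi2]
    simp only [norm_mul, norm_div, norm_pow]
    set G1 := ‖Complex.Gamma (-((t:ℂ)*Complex.I))‖ with hG1def
    set G2 := ‖Complex.Gamma (((3/4:ℝ):ℂ) - ((t/2:ℝ):ℂ)*Complex.I)‖ with hG2def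
    set G3 := ‖Complex.Gamma (((1/4:ℝ):ℂ) - ((t/2:ℝ):ℂ)*Complex.I)‖ with hG3def
    set G4 := ‖Complex.Gamma (((9/4:ℝ):ℂ) - ((t/2:ℝ):ℂ)*Complex.I)‖ with hG4def
    have W3 := ‖Complex.Gamma (((1/2:ℝ):ℂ) - ((t/2:ℝ):ℂ)*Complex.I)‖
    set W3 := ‖Complex.Gamma (((1/2:ℝ):ℂ) - ((t/2:ℝ):ℂ)*Complex.I)‖ with hW3def
    set W4 := ‖Complex.Gamma (((3/2:ℝ):ℂ) - ((t/2:ℝ):ℂ)*Complex.I)‖ with hW4def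
    have hG3 : 0 < G3 := by
      rw [hG3def, norm_pos_iff]
      exact Gamma_ne_zero_of_im (by simpa using him)
    have hG4 : 0 < G4 := by
      rw [hG4def, norm_pos_iff]
      exact Gamma_ne_zero_of_im (by simpa using him)
    have hW3 : 0 < W3 := by
      rw [hW3def, norm_pos_iff]
      exact Gamma_ne_zero_of_im (by simpa using him)
    have hW4 : 0 < W4 := by
      rw [hW4def, norm_pos_iff]
      exact Gamma_ne_zero_of_im (by simpa using him)
    have hG1 : 0 ≤ G1 := norm_nonneg _
    have hGB := gamma_bound (t/2) (by linarith)
    have hb : G2 / (G3^2*G4) ≤ Real.exp (17/4) / (W3*W4) := by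
      rw [div_le_div_iff₀ (by positivity) (by positivity)]
      calc G2*(W3*W4) ≤ Real.exp (17/4) * (G3^2*G4) := hGB
        _ = Real.exp (17/4) * (G3^2*G4) := rfl
    have hW3sq := w3_eval (t/2) hy0
    have hcp : 0 < Real.cosh (π*(t/2)) := Real.cosh_pos _
    have hWlow : (t/2) * (π/Real.cosh (π*(t/2))) ≤ W3*W4 := by
      have h4 := w4_eval (t/2) hy0
      have habs : t/2 ≤ ‖((1/2:ℝ):ℂ) - ((t/2:ℝ):ℂ)*Complex.I‖ := by
        have := Complex.abs_im_le_norm (((1/2:ℝ):ℂ) - ((t/2:ℝ):ℂ)*Complex.I)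
        simp only [Complex.sub_im, Complex.ofReal_im, Complex.mul_im, Complex.ofReal_re,
          Complex.I_im, Complex.I_re, mul_zero, mul_one, zero_sub, zero_add] at this
        calc t/2 = |(-(t/2))| := by rw [abs_neg, abs_of_pos hy0]
          _ ≤ _ := by convert this using 2; push_cast; ring_nf
      have hpc : π/Real.cosh (π*(t/2)) = W3^2 := by
        rw [eq_comm, eq_div_iff hcp.ne']
        exact hW3sq
      calc (t/2) * (π/Real.cosh (π*(t/2))) = (t/2) * W3^2 := by rw [hpc]
        _ ≤ ‖((1/2:ℝ):ℂ) - ((t/2:ℝ):ℂ)*Complex.I‖ * W3^2 := by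
            apply mul_le_mul_of_nonneg_right habs (by positivity)
        _ = W3 * (‖((1/2:ℝ):ℂ) - ((t/2:ℝ):ℂ)*Complex.I‖ * W3) := by ring
        _ = W3 * W4 := by rw [hW4def, h4]
    calc π/2 * (G1 * G2 / (G3^2 * G4))
        = π/2 * G1 * (G2 / (G3^2*G4)) := by ring
      _ ≤ π/2 * G1 * (Real.exp (17/4) / (W3*W4)) := by
          apply mul_le_mul_of_nonneg_left hb (by positivity)
      _ ≤ π/2 * G1 * (Real.exp (17/4) / ((t/2) * (π/Real.cosh (π*(t/2))))) := by
          apply mul_le_mul_of_nonneg_left _ (by positivity)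
          apply div_le_div_of_nonneg_left (by positivity) (by positivity) hWlow
      _ = Real.exp (17/4) * G1 * Real.cosh (π*(t/2)) / t := by
          field_simp
      _ ≤ (2*Real.exp 5) * t^(-(3:ℝ)/2) := numeric1 t ht G1 hG1 (z1_eval t ht0)
  -- Part 2
  · have hza : ((-1:ℂ) - (1/2 + (t:ℂ)*Complex.I))/2 = ((-3/4:ℝ):ℂ) - ((t/2:ℝ):ℂ)*Complex.I := by
      push_cast; ring
    have hzb : (((1/2:ℂ) + (t:ℂ)*Complex.I) - 2)/2 = ((-3/4:ℝ):ℂ) + ((t/2:ℝ):ℂ)*Complex.I := by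
      push_cast; ring
    have hzc : ((1:ℂ) - (1/2 + (t:ℂ)*Complex.I))/2
        = (((-3/4:ℝ):ℂ) - ((t/2:ℝ):ℂ)*Complex.I) + 1 := by push_cast; ring
    have hzd : ((1/2:ℂ) + (t:ℂ)*Complex.I)/2
        = (((-3/4:ℝ):ℂ) + ((t/2:ℝ):ℂ)*Complex.I) + 1 := by push_cast; ring
    set za : ℂ := ((-3/4:ℝ):ℂ) - ((t/2:ℝ):ℂ)*Complex.I with hzadef
    set zb : ℂ := ((-3/4:ℝ):ℂ) + ((t/2:ℝ):ℂ)*Complex.I with hzbdef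
    have hza0 : za ≠ 0 := by
      intro h
      apply him
      have := congrArg Complex.im h
      simpa [hzadef] using this
    have hzb0 : zb ≠ 0 := by
      intro h
      apply hy0.ne'
      have := congrArg Complex.im h
      simpa [hzbdef] using this
    have hGa : Complex.Gamma za ≠ 0 := Gamma_ne_zero_of_im (by simp [hzadef]; exact ht0.ne')
    have hGb : Complex.Gamma zb ≠ 0 := Gamma_ne_zero_of_im (by simp [hzbdef]; exact ht0.ne')
    rw [hza, hzb, hzc, hzd, Complex.Gamma_add_one za hza0, Complex.Gamma_add_one zb hzb0]
    have hsimp : Complex.Gamma za * Complex.Gamma zb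
        / (za * Complex.Gamma za * (zb * Complex.Gamma zb)) = (za*zb)⁻¹ := by
      field_simp
    have hzz : za*zb = (((9/16 + t^2/4 : ℝ)):ℂ) := by
      have hcast : (((9/16 + t^2/4 : ℝ)):ℂ) = 9/16 + (t:ℂ)^2/4 := by push_cast; ring
      rw [hzadef, hzbdef, hcast]
      ring_nf
      simp only [Complex.I_sq]
      push_cast
      ring
    have hr0 : (0:ℝ) < 9/16 + t^2/4 := by positivity
    have hnr : ‖(((9/16 + t^2/4 : ℝ)):ℂ)‖ = 9/16 + t^2/4 := by
      rw [Complex.norm_real, Real.norm_eq_abs, abs_of_pos hr0]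
    have hnorm : ‖(-(1/2:ℂ)) * ((((9/16 + t^2/4 : ℝ)):ℂ))⁻¹‖ = 1/2 * (9/16 + t^2/4)⁻¹ := by
      rw [norm_mul, norm_neg, norm_inv, hnr]
      norm_num
    rw [hsimp, hzz, hnorm]
    have hrp : t^(-(2:ℝ)) = (t^(2:ℕ))⁻¹ := by
      rw [Real.rpow_neg ht0.le]
      congr 1
      rw [← Real.rpow_natCast t 2]
      norm_num
    rw [hrp]
    have ht2 : (0:ℝ) < t^(2:ℕ) := by positivity
    have step1 : 1/2 * (9/16 + t^2/4)⁻¹ ≤ 1/2 * (t^2/4)⁻¹ := by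
      apply mul_le_mul_of_nonneg_left _ (by norm_num)
      apply inv_anti₀ (by positivity)
      linarith
    have step2 : 1/2 * ((t:ℝ)^2/4)⁻¹ = 2 * (t^(2:ℕ))⁻¹ := by
      field_simp
      ring
    have h5 : (1:ℝ) ≤ Real.exp 5 := Real.one_le_exp (by norm_num)
    calc 1/2 * (9/16 + t^2/4)⁻¹ ≤ 2 * (t^(2:ℕ))⁻¹ := by rw [← step2]; exact step1
      _ ≤ 2*Real.exp 5 * (t^(2:ℕ))⁻¹ := by
          apply mul_le_mul_of_nonneg_right _ (by positivity)
          nlinarith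
end

section
/- Let X > 1, Y > 0, T = √(X² - H - 1) where H = Y² + 2XY < X² - 1, a = √(X² - 1). Define f⁻ by f⁻(x²+1) = (2/(πH)) x (√(a²-x²) - √(T²-x²)) for 0 ≤ x ≤ T, f⁻(x²+1) = (2/(πH)) x √(a²-x²) for T ≤ x ≤ a, and f⁻ = 0 otherwise. Then q⁻(z) := 2∫_{√(z²-1)}^∞ f⁻(x²+1)/√(x²-(z²-1)) dx satisfies q⁻(z) = g⁻(z²), where g⁻(y) = 1 for y ≤ X² - H, (X² - y)/H for X² - H ≤ y ≤ X², and 0 for y ≥ X². In particular q⁻ is dominated by the indicator function of [0, X] on [1, ∞). -/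
open Real MeasureTheory Set

noncomputable def Fant (s b x : ℝ) : ℝ :=
  Real.sqrt ((b ^ 2 - x ^ 2) * (x ^ 2 - s ^ 2)) / 2
  + (b ^ 2 - s ^ 2) / 4 * Real.arcsin ((2 * x ^ 2 - s ^ 2 - b ^ 2) / (b ^ 2 - s ^ 2))

lemma hasDerivAt_Fant {s b x : ℝ} (hs : 0 ≤ s) (hx : s < x) (hxb : x < b) :
    HasDerivAt (Fant s b) (x * Real.sqrt (b ^ 2 - x ^ 2) / Real.sqrt (x ^ 2 - s ^ 2)) x := by
  have hA : 0 < b ^ 2 - x ^ 2 := by nlinarith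
  have hB : 0 < x ^ 2 - s ^ 2 := by nlinarith
  have hbs : 0 < b ^ 2 - s ^ 2 := by nlinarith
  set p := Real.sqrt (b ^ 2 - x ^ 2) with hp
  set qq := Real.sqrt (x ^ 2 - s ^ 2) with hq
  have hp0 : 0 < p := Real.sqrt_pos.mpr hA
  have hq0 : 0 < qq := Real.sqrt_pos.mpr hB
  have hp2 : p ^ 2 = b ^ 2 - x ^ 2 := Real.sq_sqrt hA.le
  have hq2 : qq ^ 2 = x ^ 2 - s ^ 2 := Real.sq_sqrt hB.le
  have hx2 : HasDerivAt (fun y : ℝ => y ^ 2) (2 * x) x := by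
    simpa using hasDerivAt_pow 2 x
  -- sqrt part
  have hu : HasDerivAt (fun y : ℝ => (b ^ 2 - y ^ 2) * (y ^ 2 - s ^ 2))
      (-(2 * x) * (x ^ 2 - s ^ 2) + (b ^ 2 - x ^ 2) * (2 * x)) x := by
    have h1 : HasDerivAt (fun y : ℝ => b ^ 2 - y ^ 2) (0 - 2 * x) x :=
      (hasDerivAt_const x (b ^ 2)).sub hx2
    have h2 : HasDerivAt (fun y : ℝ => y ^ 2 - s ^ 2) (2 * x - 0) x :=
      hx2.sub (hasDerivAt_const x (s ^ 2))
    simpa using h1.fun_mul h2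
  have huval : (b ^ 2 - x ^ 2) * (x ^ 2 - s ^ 2) ≠ 0 := by positivity
  have hsqrt := (hu.sqrt huval).div_const 2
  -- arcsin part
  have hw : HasDerivAt (fun y : ℝ => (2 * y ^ 2 - s ^ 2 - b ^ 2) / (b ^ 2 - s ^ 2))
      (4 * x / (b ^ 2 - s ^ 2)) x := by
    have : HasDerivAt (fun y : ℝ => 2 * y ^ 2 - s ^ 2 - b ^ 2) (4 * x) x := by
      have := ((hx2.const_mul 2).fun_sub (hasDerivAt_const x (s ^ 2))).fun_sub (hasDerivAt_const x (b ^ 2))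
      refine this.congr_deriv ?_; ring
    exact this.div_const _
  set w : ℝ := (2 * x ^ 2 - s ^ 2 - b ^ 2) / (b ^ 2 - s ^ 2) with hwdef
  have hw1 : w < 1 := by
    rw [hwdef, div_lt_one hbs]; nlinarith
  have hw2 : -1 < w := by
    rw [hwdef, lt_div_iff₀ hbs]; nlinarith
  have harc : HasDerivAt (fun y : ℝ => Real.arcsin ((2 * y ^ 2 - s ^ 2 - b ^ 2) / (b ^ 2 - s ^ 2)))
      (1 / Real.sqrt (1 - w ^ 2) * (4 * x / (b ^ 2 - s ^ 2))) x :=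
    by have := (Real.hasDerivAt_arcsin hw2.ne' hw1.ne).comp x hw; exact this
  have hsw : Real.sqrt (1 - w ^ 2) = 2 * p * qq / (b ^ 2 - s ^ 2) := by
    have h1 : 1 - w ^ 2 = (2 * p * qq / (b ^ 2 - s ^ 2)) ^ 2 := by
      rw [hwdef]
      field_simp
      nlinarith [hp2, hq2]
    rw [h1, Real.sqrt_sq (by positivity)]
  have htot := hsqrt.fun_add (harc.const_mul ((b ^ 2 - s ^ 2) / 4))
  have : Fant s b = fun y => Real.sqrt ((b ^ 2 - y ^ 2) * (y ^ 2 - s ^ 2)) / 2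
      + (b ^ 2 - s ^ 2) / 4 * Real.arcsin ((2 * y ^ 2 - s ^ 2 - b ^ 2) / (b ^ 2 - s ^ 2)) := rfl
  rw [this]
  refine htot.congr_deriv ?_
  rw [hsw]
  have hsm : Real.sqrt ((b ^ 2 - x ^ 2) * (x ^ 2 - s ^ 2)) = p * qq := by
    rw [hp, hq, ← Real.sqrt_mul hA.le]
  rw [hsm]
  have hbs2 : b ^ 2 - s ^ 2 = p ^ 2 + qq ^ 2 := by rw [hp2, hq2]; ring
  rw [← hp2, ← hq2, hbs2]
  field_simp
  ring

lemma intble {s b : ℝ} (hs : 0 ≤ s) (hsb : s ≤ b) :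
    IntervalIntegrable (fun x => x * Real.sqrt (b ^ 2 - x ^ 2) / Real.sqrt (x ^ 2 - s ^ 2))
      volume s b := by
  have hb : 0 ≤ b := hs.trans hsb
  -- dominating function
  have hg : IntervalIntegrable (fun x => b * Real.sqrt b * (x - s) ^ (-(1/2) : ℝ)) volume s b := by
    have h0 : IntervalIntegrable (fun x : ℝ => x ^ (-(1/2) : ℝ)) volume 0 (b - s) :=
      intervalIntegral.intervalIntegrable_rpow' (by norm_num)
    have h1 := h0.comp_sub_right s
    simp only [zero_add, sub_add_cancel] at h1
    exact h1.const_mul _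
  apply hg.mono_fun
  · have m1 : Measurable fun x : ℝ => x * Real.sqrt (b ^ 2 - x ^ 2) :=
      (continuous_id.mul (Real.continuous_sqrt.comp (by continuity))).measurable
    have m2 : Measurable fun x : ℝ => Real.sqrt (x ^ 2 - s ^ 2) :=
      (Real.continuous_sqrt.comp (by continuity)).measurable
    exact (m1.div m2).aestronglyMeasurable
  · filter_upwards [MeasureTheory.ae_restrict_mem measurableSet_uIoc] with x hx
    rw [Set.uIoc_of_le hsb] at hx
    obtain ⟨hx1, hx2⟩ := hx
    have hx0 : 0 < x := lt_of_le_of_lt hs hx1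
    have hxs : 0 < x - s := by linarith
    have h1 : Real.sqrt (b ^ 2 - x ^ 2) ≤ b := by
      calc Real.sqrt (b ^ 2 - x ^ 2) ≤ Real.sqrt (b ^ 2) :=
            Real.sqrt_le_sqrt (by nlinarith)
        _ = b := Real.sqrt_sq hb
    have hsplit : Real.sqrt (x ^ 2 - s ^ 2) = Real.sqrt (x - s) * Real.sqrt (x + s) := by
      rw [← Real.sqrt_mul hxs.le]; ring_nf
    have hrp : (x - s) ^ (-(1/2) : ℝ) = 1 / Real.sqrt (x - s) := by
      rw [Real.rpow_neg hxs.le, Real.sqrt_eq_rpow, one_div]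
      norm_num
    have hfx : 0 ≤ x * Real.sqrt (b ^ 2 - x ^ 2) / Real.sqrt (x ^ 2 - s ^ 2) := by positivity
    have hgx : 0 ≤ b * Real.sqrt b * (x - s) ^ (-(1/2) : ℝ) := by positivity
    rw [Real.norm_eq_abs, Real.norm_eq_abs, abs_of_nonneg hfx, abs_of_nonneg hgx]
    rw [hsplit, hrp]
    have hq1 : 0 < Real.sqrt (x - s) := Real.sqrt_pos.mpr hxs
    have hq2 : 0 < Real.sqrt (x + s) := Real.sqrt_pos.mpr (by linarith)
    rw [div_le_iff₀ (by positivity)]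
    have key : x * Real.sqrt (b ^ 2 - x ^ 2) ≤ b * Real.sqrt b * Real.sqrt (x + s) := by
      have hxle : x ≤ Real.sqrt x * Real.sqrt (x + s) := by
        calc x = Real.sqrt x * Real.sqrt x := (Real.mul_self_sqrt hx0.le).symm
          _ ≤ Real.sqrt x * Real.sqrt (x + s) := by
              apply mul_le_mul_of_nonneg_left (Real.sqrt_le_sqrt (by linarith)) (Real.sqrt_nonneg x)
      calc x * Real.sqrt (b ^ 2 - x ^ 2) ≤ (Real.sqrt x * Real.sqrt (x + s)) * b := by
            apply mul_le_mul hxle h1 (Real.sqrt_nonneg _) (by positivity)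
        _ ≤ (Real.sqrt b * Real.sqrt (x + s)) * b := by
            have h3 : Real.sqrt x ≤ Real.sqrt b := Real.sqrt_le_sqrt hx2
            exact mul_le_mul_of_nonneg_right (mul_le_mul_of_nonneg_right h3 hq2.le) hb
        _ = b * Real.sqrt b * Real.sqrt (x + s) := by ring
    calc x * Real.sqrt (b ^ 2 - x ^ 2) ≤ b * Real.sqrt b * Real.sqrt (x + s) := key
      _ = b * Real.sqrt b * (1 / Real.sqrt (x - s)) * (Real.sqrt (x - s) * Real.sqrt (x + s)) := by
          field_simp [hq1.ne']

lemma integral_piece {s b : ℝ} (hs : 0 ≤ s) (hsb : s ≤ b) :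
    ∫ x in s..b, x * Real.sqrt (b ^ 2 - x ^ 2) / Real.sqrt (x ^ 2 - s ^ 2)
      = π * (b ^ 2 - s ^ 2) / 4 := by
  rcases eq_or_lt_of_le hsb with rfl | hlt
  · simp
  have hbs : 0 < b ^ 2 - s ^ 2 := by nlinarith
  have hcont : ContinuousOn (Fant s b) (Set.Icc s b) := by
    apply ContinuousOn.add
    · exact (Real.continuous_sqrt.comp (by continuity)).continuousOn.div_const 2
    · exact (continuousOn_const.mul ((Real.continuous_arcsin.comp (by continuity)).continuousOn))
  have hderiv : ∀ x ∈ Set.Ioo s b, HasDerivWithinAt (Fant s b)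
      (x * Real.sqrt (b ^ 2 - x ^ 2) / Real.sqrt (x ^ 2 - s ^ 2)) (Set.Ioi x) x := by
    intro x hx
    exact (hasDerivAt_Fant hs hx.1 hx.2).hasDerivWithinAt
  rw [intervalIntegral.integral_eq_sub_of_hasDeriv_right_of_le hsb hcont hderiv (intble hs hsb)]
  have h1 : Fant s b b = (b ^ 2 - s ^ 2) / 4 * (π / 2) := by
    unfold Fant
    rw [show (2 * b ^ 2 - s ^ 2 - b ^ 2) / (b ^ 2 - s ^ 2) = 1 by field_simp; ring]
    rw [Real.arcsin_one]
    simp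
  have h2 : Fant s b s = (b ^ 2 - s ^ 2) / 4 * (-(π / 2)) := by
    unfold Fant
    rw [show (2 * s ^ 2 - s ^ 2 - b ^ 2) / (b ^ 2 - s ^ 2) = -1 by field_simp; ring]
    rw [Real.arcsin_neg_one]
    simp
  rw [h1, h2]; ring

lemma key_Ioi {s b : ℝ} (hs : 0 ≤ s) (hb : 0 ≤ b) :
    IntegrableOn (fun x => x * Real.sqrt (b ^ 2 - x ^ 2) / Real.sqrt (x ^ 2 - s ^ 2))
        (Set.Ioi s) volume ∧
      ∫ x in Set.Ioi s, x * Real.sqrt (b ^ 2 - x ^ 2) / Real.sqrt (x ^ 2 - s ^ 2)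
        = π * max (b ^ 2 - s ^ 2) 0 / 4 := by
  set f : ℝ → ℝ := fun x => x * Real.sqrt (b ^ 2 - x ^ 2) / Real.sqrt (x ^ 2 - s ^ 2) with hf
  rcases le_or_gt b s with hbs | hsb
  · have hEq : Set.EqOn f 0 (Set.Ioi s) := by
      intro x hx
      have hx' : b < x := lt_of_le_of_lt hbs hx
      have : Real.sqrt (b ^ 2 - x ^ 2) = 0 :=
        Real.sqrt_eq_zero'.mpr (by nlinarith [lt_of_le_of_lt hs hx])
      simp [hf, this]
    constructor
    · exact (integrableOn_congr_fun hEq measurableSet_Ioi).mpr (integrableOn_zero)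
    · rw [MeasureTheory.setIntegral_congr_fun measurableSet_Ioi hEq]
      have : max (b ^ 2 - s ^ 2) 0 = 0 := max_eq_right (by nlinarith)
      simp [this]
  · have hsb' : s ≤ b := hsb.le
    have hi1 : IntegrableOn f (Set.Ioc s b) volume :=
      (intervalIntegrable_iff_integrableOn_Ioc_of_le hsb').mp (intble hs hsb')
    have hEq : Set.EqOn f 0 (Set.Ioi b) := by
      intro x hx
      have hx' : b < x := hx
      have : Real.sqrt (b ^ 2 - x ^ 2) = 0 :=
        Real.sqrt_eq_zero'.mpr (by nlinarith [lt_of_le_of_lt hb hx'])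
      simp [hf, this]
    have hi2 : IntegrableOn f (Set.Ioi b) volume :=
      (integrableOn_congr_fun hEq measurableSet_Ioi).mpr (integrableOn_zero)
    have hu : Set.Ioc s b ∪ Set.Ioi b = Set.Ioi s := Set.Ioc_union_Ioi_eq_Ioi hsb'
    have hdisj : Disjoint (Set.Ioc s b) (Set.Ioi b) := Set.Ioc_disjoint_Ioi le_rfl
    constructor
    · rw [← hu]; exact hi1.union hi2
    · rw [← hu, MeasureTheory.setIntegral_union hdisj measurableSet_Ioi hi1 hi2]
      rw [MeasureTheory.setIntegral_congr_fun measurableSet_Ioi hEq]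
      have h2 : ∫ x in Set.Ioc s b, f x = ∫ x in s..b, f x :=
        (intervalIntegral.integral_of_le hsb').symm
      rw [h2, integral_piece hs hsb']
      have : max (b ^ 2 - s ^ 2) 0 = b ^ 2 - s ^ 2 := max_eq_left (by nlinarith)
      simp [this]

set_option maxHeartbeats 1000000 in
theorem stmt17 (X Y : ℝ) (hX : 1 < X) (hY : 0 < Y)
    (H T a : ℝ) (hH : H = Y ^ 2 + 2 * X * Y) (hH2 : H < X ^ 2 - 1)
    (hT : T = Real.sqrt (X ^ 2 - H - 1)) (ha : a = Real.sqrt (X ^ 2 - 1))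
    (k : ℝ → ℝ)
    (hk : ∀ x, k x = if 0 ≤ x ∧ x ≤ T then
        (2 / (π * H)) * x * (Real.sqrt (a ^ 2 - x ^ 2) - Real.sqrt (T ^ 2 - x ^ 2))
      else if T ≤ x ∧ x ≤ a then (2 / (π * H)) * x * Real.sqrt (a ^ 2 - x ^ 2)
      else 0)
    (q g : ℝ → ℝ)
    (hq : ∀ z, q z = 2 * ∫ x in Set.Ioi (Real.sqrt (z ^ 2 - 1)),
      k x / Real.sqrt (x ^ 2 - (z ^ 2 - 1)))
    (hg : ∀ y, g y = if y ≤ X ^ 2 - H then 1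
      else if y ≤ X ^ 2 then (X ^ 2 - y) / H else 0) :
    (∀ z, 1 ≤ z → q z = g (z ^ 2)) ∧
    (∀ z, 1 ≤ z → q z ≤ Set.indicator (Set.Icc (0 : ℝ) X) (fun _ => (1 : ℝ)) z) := by
  have hπ : (0 : ℝ) < π := Real.pi_pos
  have hH0 : 0 < H := by rw [hH]; nlinarith
  have hT2pos : (0 : ℝ) ≤ X ^ 2 - H - 1 := by nlinarith
  have hT0 : 0 ≤ T := by rw [hT]; exact Real.sqrt_nonneg _
  have hT2 : T ^ 2 = X ^ 2 - H - 1 := by rw [hT, Real.sq_sqrt hT2pos]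
  have ha0 : 0 ≤ a := by rw [ha]; exact Real.sqrt_nonneg _
  have ha2 : a ^ 2 = X ^ 2 - 1 := by rw [ha, Real.sq_sqrt (by nlinarith)]
  set c : ℝ := 2 / (π * H) with hc
  have part1 : ∀ z, 1 ≤ z → q z = g (z ^ 2) := by
    intro z hz
    set s : ℝ := Real.sqrt (z ^ 2 - 1) with hsdef
    have hs0 : 0 ≤ s := Real.sqrt_nonneg _
    have hs2 : s ^ 2 = z ^ 2 - 1 := Real.sq_sqrt (by nlinarith)
    have hkey_a := key_Ioi hs0 ha0
    have hkey_T := key_Ioi hs0 hT0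
    have hpt : Set.EqOn (fun x => k x / Real.sqrt (x ^ 2 - (z ^ 2 - 1)))
        (fun x => c * (x * Real.sqrt (a ^ 2 - x ^ 2) / Real.sqrt (x ^ 2 - s ^ 2))
          - c * (x * Real.sqrt (T ^ 2 - x ^ 2) / Real.sqrt (x ^ 2 - s ^ 2)))
        (Set.Ioi s) := by
      intro x hx
      have hxs : s < x := hx
      have hx0 : 0 < x := lt_of_le_of_lt hs0 hxs
      simp only
      rw [hk x, show z ^ 2 - 1 = s ^ 2 from hs2.symm]
      split_ifs with h1 h2
      · ring
      · have hTx : T ≤ x := h2.1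
        have hz : Real.sqrt (T ^ 2 - x ^ 2) = 0 :=
          Real.sqrt_eq_zero'.mpr (by nlinarith)
        rw [hz]; ring
      · have hTx : T < x := by
          by_contra hcon
          exact h1 ⟨hx0.le, not_lt.mp hcon⟩
        have hax : a < x := by
          by_contra hcon
          exact h2 ⟨hTx.le, not_lt.mp hcon⟩
        have hz1 : Real.sqrt (T ^ 2 - x ^ 2) = 0 :=
          Real.sqrt_eq_zero'.mpr (by nlinarith)
        have hz2 : Real.sqrt (a ^ 2 - x ^ 2) = 0 :=
          Real.sqrt_eq_zero'.mpr (by nlinarith)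
        rw [hz1, hz2]; ring
    have hqz : q z = 2 * (c * (π * max (a ^ 2 - s ^ 2) 0 / 4)
        - c * (π * max (T ^ 2 - s ^ 2) 0 / 4)) := by
      rw [hq z, ← hsdef]
      congr 1
      rw [MeasureTheory.setIntegral_congr_fun measurableSet_Ioi hpt,
        MeasureTheory.integral_sub (hkey_a.1.const_mul c) (hkey_T.1.const_mul c),
        MeasureTheory.integral_const_mul, MeasureTheory.integral_const_mul,
        hkey_a.2, hkey_T.2]
    have has2 : a ^ 2 - s ^ 2 = X ^ 2 - z ^ 2 := by rw [ha2, hs2]; ring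
    have hTs2 : T ^ 2 - s ^ 2 = X ^ 2 - H - z ^ 2 := by rw [hT2, hs2]; ring
    rw [hqz, has2, hTs2, hg]
    split_ifs with hc1 hc2
    · rw [max_eq_left (by nlinarith), max_eq_left (by nlinarith), hc]
      field_simp
      ring
    · rw [max_eq_left (by nlinarith), max_eq_right (by nlinarith), hc]
      field_simp
      ring
    · rw [max_eq_right (by nlinarith), max_eq_right (by nlinarith)]
      ring
  refine ⟨part1, fun z hz => ?_⟩
  rw [part1 z hz, hg]
  by_cases hzX : z ≤ X
  · rw [Set.indicator_of_mem (Set.mem_Icc.mpr ⟨by linarith, hzX⟩)]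
    split_ifs with hc1 hc2
    · exact le_refl 1
    · rw [div_le_one hH0]; nlinarith
    · norm_num
  · have hzX' : X < z := not_le.mp hzX
    rw [Set.indicator_of_notMem (fun hmem => hzX (Set.mem_Icc.mp hmem).2)]
    have hx2 : X ^ 2 < z ^ 2 := by nlinarith
    split_ifs with hc1 hc2
    · nlinarith
    · nlinarith
    · exact le_refl 0
end
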